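/- arXiv:2310.14986 — 8 statements merged into one kernel-verified Lean document; each statement's English description precedes it below -/
import Mathlib

section
/- Let f : ℕ → ℕ be a function such that the series ∑_{k=0}^∞ 2^{−f(k)} converges, and let σ : ℕ → ℕ be a bijection. Then for all n ∈ ℕ one has ∑_{k=n}^∞ 2^{−f*(k)} ≤ ∑_{k=n}^∞ 2^{−f(σ(k))}, where f* is the non-decreasing rearrangement of f. -/
open Filter

/-- A function `f : ℕ → ℕ` tends to infinity. -/
def TendsToInfinity (f : ℕ → ℕ) : Prop := ∀ c : ℕ, ∃ m : ℕ, ∀ k ≥ m, c < f k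

/-- `uf f n` is the number of `k` with `f k = n`. -/
noncomputable def uf (f : ℕ → ℕ) (n : ℕ) : ℕ := Nat.card {k : ℕ | f k = n}

/-- A series of reals converges computably: it has a limit together with a computable
modulus of convergence for the sequence of partial sums. -/
def ConvergesComputably (a : ℕ → ℝ) : Prop :=
  ∃ (x : ℝ) (s : ℕ → ℕ), Computable s ∧
    ∀ n : ℕ, ∀ m ≥ s n, |x - ∑ k ∈ Finset.range m, a k| ≤ (2:ℝ)^(-(n:ℤ))

/-- `f` is a name for `x` if `∑_k 2^{-f k} = x`. -/
def IsName (f : ℕ → ℕ) (x : ℝ) : Prop := HasSum (fun k => (2:ℝ)^(-(f k : ℤ))) x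

/-- A real is reordered computable if it has a computable name `f` such that
`∑_k (uf f k)·2^{-k}` converges computably. -/
def ReorderedComputable (x : ℝ) : Prop :=
  ∃ f : ℕ → ℕ, Computable f ∧ IsName f x ∧
    ConvergesComputably (fun k => (uf f k : ℝ) * (2:ℝ)^(-(k:ℤ)))

/-- A real is left-computable if some computable strictly increasing sequence of
rationals converges to it. -/
def LeftComputable (x : ℝ) : Prop :=
  ∃ q : ℕ → ℚ, Computable q ∧ StrictMono q ∧
    Tendsto (fun n => (q n : ℝ)) atTop (nhds x)

/-- A real is computably approximable if some computable sequence of rationals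
converges to it. -/
def ComputablyApproximable (x : ℝ) : Prop :=
  ∃ q : ℕ → ℚ, Computable q ∧ Tendsto (fun n => (q n : ℝ)) atTop (nhds x)

/-- A real is computable if some computable sequence of rationals approximates it
with error at most `2^{-n}`. -/
def ComputableReal (x : ℝ) : Prop :=
  ∃ q : ℕ → ℚ, Computable q ∧ ∀ n : ℕ, |x - (q n : ℝ)| ≤ (2:ℝ)^(-(n:ℤ))

/-- Solovay reducibility on left-computable reals. -/
def SolovayReducible (x y : ℝ) : Prop :=
  ∀ yq : ℕ → ℚ, Computable yq → StrictMono yq →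
    Tendsto (fun n => (yq n : ℝ)) atTop (nhds y) →
    ∃ xq : ℕ → ℚ, Computable xq ∧ StrictMono xq ∧
      Tendsto (fun n => (xq n : ℝ)) atTop (nhds x) ∧
      ∃ c : ℝ, 0 < c ∧ ∀ n : ℕ, x - (xq n : ℝ) ≤ c * (y - (yq n : ℝ))

/-- A set of naturals is computably enumerable: empty or the range of a computable function. -/
def CE (A : Set ℕ) : Prop := A = ∅ ∨ ∃ f : ℕ → ℕ, Computable f ∧ A = Set.range f

/-- `xA A = ∑_{n ∈ A} 2^{-(n+1)}`. -/
noncomputable def xA (A : Set ℕ) : ℝ := ∑' n : A, (2:ℝ)^(-((n : ℕ) : ℤ) - 1)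

/-- A real is strongly left-computable if it equals `xA A` for a c.e. set `A`. -/
def StronglyLeftComputable (x : ℝ) : Prop := ∃ A : Set ℕ, CE A ∧ xA A = x

/-- A real is regular if it is a finite sum of strongly left-computable reals. -/
def Regular (x : ℝ) : Prop :=
  ∃ (n : ℕ) (s : Fin n → ℝ), (∀ i, StronglyLeftComputable (s i)) ∧ (∑ i, s i) = x

/-- An infinite set of naturals is immune if it has no infinite c.e. subset. -/
def Immune (A : Set ℕ) : Prop :=
  A.Infinite ∧ ∀ B : Set ℕ, B ⊆ A → B.Infinite → ¬ CE B

/-- A real is nearly computable if some computable sequence of rationals converges to it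
such that along every computable strictly increasing function the consecutive differences
converge with a computable modulus of convergence. -/
def NearlyComputable (x : ℝ) : Prop :=
  ∃ q : ℕ → ℚ, Computable q ∧ Tendsto (fun n => (q n : ℝ)) atTop (nhds x) ∧
    ∀ s : ℕ → ℕ, Computable s → StrictMono s →
      ∃ (L : ℝ) (m : ℕ → ℕ), Computable m ∧
        ∀ n : ℕ, ∀ k ≥ m n, |((q (s (k+1)) : ℝ) - (q (s k) : ℝ)) - L| ≤ (2:ℝ)^(-(n:ℤ))

/-- A real is regainingly approximable if some computable strictly increasing sequence of
rationals converges to it and comes `2^{-n}`-close infinitely often. -/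
def RegaininglyApproximable (x : ℝ) : Prop :=
  ∃ q : ℕ → ℚ, Computable q ∧ StrictMono q ∧
    Tendsto (fun n => (q n : ℝ)) atTop (nhds x) ∧
    ∀ m : ℕ, ∃ n ≥ m, x - (q n : ℝ) ≤ (2:ℝ)^(-(n:ℤ))

/-- `limsup_n (a n)^{1/n}`, computed in the extended nonnegative reals. -/
noncomputable def rootLimsup (a : ℕ → ℕ) : ENNReal :=
  Filter.limsup (fun n => (a n : ENNReal) ^ (1 / (n:ℝ))) Filter.atTop

/-- The characteristic dyadic value of `x`: the infimum of `rootLimsup (uf f)` over all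
computable names `f` for `x`. -/
noncomputable def varsigma (x : ℝ) : ENNReal :=
  ⨅ (f : ℕ → ℕ) (_ : Computable f ∧ IsName f x), rootLimsup (uf f)

/-- the non-decreasing rearrangement of a convergent dyadic series has
the fastest tails among all rearrangements. -/
theorem stmt0 (f : ℕ → ℕ) (hf : Summable (fun k => (2:ℝ)^(-(f k : ℤ))))
    (σ : ℕ → ℕ) (hσ : Function.Bijective σ)
    (fstar : ℕ → ℕ) (hmono : Monotone fstar) (hunb : ∀ c : ℕ, ∃ n : ℕ, c < fstar n)
    (hu : uf fstar = uf f) :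
    ∀ n : ℕ,
      (∑' k : ℕ, (2:ℝ)^(-(fstar (n + k) : ℤ))) ≤ ∑' k : ℕ, (2:ℝ)^(-(f (σ (n + k)) : ℤ)) := by
  intro n
  set h : ℕ → ℕ := fun k => f (σ k) with hh
  have hhsum : Summable (fun k => (2:ℝ)^(-(h k : ℤ))) := by
    have := (Equiv.ofBijective σ hσ).summable_iff (f := fun k => (2:ℝ)^(-(f k : ℤ)))
    exact this.mpr hf
  have hfibf : ∀ v : ℕ, (Set.Finite {k : ℕ | h k = v}) := by
    intro v
    have h0 : Tendsto (fun k => (2:ℝ)^(-(h k : ℤ))) cofinite (nhds 0) :=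
      hhsum.tendsto_cofinite_zero
    have hsub : {k : ℕ | h k = v} ⊆ {k : ℕ | ¬ ((2:ℝ)^(-(h k : ℤ)) ∈ Metric.ball (0:ℝ) ((2:ℝ)^(-(v:ℤ))))} := by
      intro k hk
      simp only [Set.mem_setOf_eq] at hk ⊢
      rw [hk]
      simp [Metric.mem_ball, Real.dist_eq, abs_of_pos (zpow_pos (by norm_num : (0:ℝ)<2) _)]
    refine Set.Finite.subset ?_ hsub
    have := h0 (Metric.ball_mem_nhds (0:ℝ) (zpow_pos (by norm_num : (0:ℝ)<2) (-(v:ℤ))))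
    simpa [Filter.mem_cofinite, Set.preimage, Set.compl_setOf] using this
  have hfibstar : ∀ v : ℕ, (Set.Finite {k : ℕ | fstar k = v}) := by
    intro v
    obtain ⟨m, hm⟩ := hunb v
    refine Set.Finite.subset (Set.finite_Iio m) ?_
    intro k hk
    simp only [Set.mem_setOf_eq] at hk
    by_contra hle
    simp only [Set.mem_Iio, not_lt] at hle
    exact absurd (hk ▸ hmono hle) (by omega)
  have hcard : ∀ v : ℕ, Nat.card {k : ℕ // fstar k = v} = Nat.card {k : ℕ // h k = v} := by
    intro v
    have e1 : {k : ℕ // h k = v} ≃ {k : ℕ // f k = v} :=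
      (Equiv.ofBijective σ hσ).subtypeEquiv (fun k => Iff.rfl)
    have := congrFun hu v
    simp only [uf] at this
    rw [Nat.card_congr e1]
    exact this
  have hfe : ∀ v : ℕ, Nonempty ({k : ℕ // fstar k = v} ≃ {k : ℕ // h k = v}) := by
    intro v
    have : Finite {k : ℕ // fstar k = v} := (hfibstar v).to_subtype
    have : Finite {k : ℕ // h k = v} := (hfibf v).to_subtype
    exact Finite.card_eq.mp (hcard v)
  -- glue to a global bijection τ with h (τ k) = fstar k
  let τ : ℕ ≃ ℕ := Equiv.ofFiberEquiv (fun v => (hfe v).some)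
  have hτ : ∀ k, h (τ k) = fstar k := fun k => Equiv.ofFiberEquiv_map _ k
  show (∑' k : ℕ, (2:ℝ)^(-(fstar (n + k) : ℤ))) ≤ ∑' k : ℕ, (2:ℝ)^(-(h (n + k) : ℤ))
  classical
  set A : Finset ℕ := ((Finset.range n).image τ.symm).filter (fun k => n ≤ k) with hA
  set B : Finset ℕ := (Finset.range n).filter (fun j => n ≤ τ j) with hB
  have hmemA : ∀ k, k ∈ A ↔ (τ k < n ∧ n ≤ k) := by
    intro k
    simp only [hA, Finset.mem_filter, Finset.mem_image, Finset.mem_range]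
    constructor
    · rintro ⟨⟨m, hm, rfl⟩, h2⟩
      exact ⟨by simpa using hm, h2⟩
    · rintro ⟨h1, h2⟩
      exact ⟨⟨τ k, h1, τ.symm_apply_apply k⟩, h2⟩
  have hmemB : ∀ j, j ∈ B ↔ (j < n ∧ n ≤ τ j) := by
    intro j; simp [hB, Finset.mem_filter]
  -- cardinalities agree
  have hcardAB : A.card = B.card := by
    have hC : ((Finset.range n).image τ.symm).card = n := by
      rw [Finset.card_image_of_injective _ τ.symm.injective, Finset.card_range]
    have h1 := Finset.card_filter_add_card_filter_not
      (s := (Finset.range n).image τ.symm) (p := fun k => n ≤ k)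
    have h2 := Finset.card_filter_add_card_filter_not
      (s := Finset.range n) (p := fun j => n ≤ τ j)
    have hDD : ((Finset.range n).image τ.symm).filter (fun k => ¬ n ≤ k)
        = (Finset.range n).filter (fun j => ¬ n ≤ τ j) := by
      ext k
      simp only [Finset.mem_filter, Finset.mem_image, Finset.mem_range, not_le]
      constructor
      · rintro ⟨⟨m, hm, rfl⟩, h2⟩
        refine ⟨h2, by simpa using hm⟩
      · rintro ⟨h1, h2⟩
        exact ⟨⟨τ k, h2, τ.symm_apply_apply k⟩, h1⟩
    rw [hC] at h1
    rw [Finset.card_range] at h2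
    rw [hDD] at h1
    rw [hA, hB]
    omega
  let eAB : {x // x ∈ A} ≃ {x // x ∈ B} := Finset.equivOfCardEq hcardAB
  -- define the reindexing on tails
  let ψ : ℕ → ℕ := fun m => if hm : m ∈ A then (τ ((eAB ⟨m, hm⟩ : ℕ))) else τ m
  have hψ_ge : ∀ m, n ≤ m → n ≤ ψ m := by
    intro m hm
    by_cases hmA : m ∈ A
    · simp only [ψ, dif_pos hmA]
      exact ((hmemB _).mp (eAB ⟨m, hmA⟩).2).2
    · simp only [ψ, dif_neg hmA]
      by_contra hcon
      exact hmA ((hmemA m).mpr ⟨by omega, hm⟩)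
  have hψ_le : ∀ m, n ≤ m → h (ψ m) ≤ fstar m := by
    intro m hm
    by_cases hmA : m ∈ A
    · simp only [ψ, dif_pos hmA]
      rw [hτ]
      exact hmono (le_of_lt (lt_of_lt_of_le ((hmemB _).mp (eAB ⟨m, hmA⟩).2).1 hm))
    · simp only [ψ, dif_neg hmA]
      exact le_of_eq (hτ m)
  have hψ_inj : ∀ m₁ m₂, n ≤ m₁ → n ≤ m₂ → ψ m₁ = ψ m₂ → m₁ = m₂ := by
    intro m₁ m₂ h₁ h₂ heq
    by_cases hA1 : m₁ ∈ A <;> by_cases hA2 : m₂ ∈ A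
    · simp only [ψ, dif_pos hA1, dif_pos hA2] at heq
      have := τ.injective heq
      have := eAB.injective (Subtype.ext this)
      exact congrArg Subtype.val this
    · simp only [ψ, dif_pos hA1, dif_neg hA2] at heq
      have := τ.injective heq
      -- left value is in B so < n, but m₂ ≥ n
      have hb := ((hmemB _).mp (eAB ⟨m₁, hA1⟩).2).1
      omega
    · simp only [ψ, dif_neg hA1, dif_pos hA2] at heq
      have := τ.injective heq
      have hb := ((hmemB _).mp (eAB ⟨m₂, hA2⟩).2).1
      omega
    · simp only [ψ, dif_neg hA1, dif_neg hA2] at heq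
      exact τ.injective heq
  -- summability of the fstar series
  have hfssum : Summable (fun k => (2:ℝ)^(-(fstar k : ℤ))) := by
    have := (τ.summable_iff (f := fun k => (2:ℝ)^(-(h k : ℤ)))).mpr hhsum
    convert this using 2 with k
    simp only [Function.comp]
    rw [hτ]
  refine Summable.tsum_le_tsum_of_inj (fun k => ψ (n + k) - n) ?_ (fun c _ => ?_) (fun k => ?_) ?_ ?_
  · intro k₁ k₂ heq
    simp only at heq
    have g1 := hψ_ge (n + k₁) (by omega)
    have g2 := hψ_ge (n + k₂) (by omega)
    have : ψ (n + k₁) = ψ (n + k₂) := by omega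
    have := hψ_inj _ _ (by omega) (by omega) this
    omega
  · positivity
  · have hge := hψ_ge (n + k) (by omega)
    have hle := hψ_le (n + k) (by omega)
    have : n + (ψ (n + k) - n) = ψ (n + k) := by omega
    rw [this]
    apply zpow_le_zpow_right₀ (by norm_num : (1:ℝ) ≤ 2)
    omega
  · have := (summable_nat_add_iff (f := fun k => (2:ℝ)^(-(fstar k : ℤ))) n).mpr hfssum
    simpa [add_comm] using this
  · have := (summable_nat_add_iff (f := fun k => (2:ℝ)^(-(h k : ℤ))) n).mpr hhsum
    simpa [add_comm] using this
end

section
/- Let f : ℕ → ℕ be a function that tends to infinity. Then the following are equivalent: (1) there is a bijection σ : ℕ → ℕ such that the series ∑_{k=0}^∞ 2^{−f(σ(k))} converges computably; (2) the series ∑_{k=0}^∞ 2^{−f*(k)} converges computably, where f* is the non-decreasing rearrangement of f; (3) the series ∑_{k=0}^∞ u_f(k)·2^{−k} converges computably. -/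
open Filter

section helpers

lemma two_zpow_eq (n : ℕ) : (2:ℝ)^(-(n:ℤ)) = (1/2:ℝ)^n := by
  rw [zpow_neg, zpow_natCast, one_div, inv_pow]

lemma two_zpow_pos (n : ℕ) : (0:ℝ) < (2:ℝ)^(-(n:ℤ)) := by positivity

lemma two_zpow_ne_top (n : ℕ) : (2:ENNReal)^(-(n:ℤ)) ≠ ⊤ :=
  (ENNReal.zpow_lt_top (by norm_num) (by norm_num) _).ne

lemma two_zpow_ofReal (n : ℕ) :
    ENNReal.ofReal ((2:ℝ)^(-(n:ℤ))) = (2:ENNReal)^(-(n:ℤ)) := by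
  have h1 : (2:ℝ)^(-(n:ℤ)) = ((2:ℝ)^n)⁻¹ := by rw [zpow_neg, zpow_natCast]
  have h2 : (2:ENNReal)^(-(n:ℤ)) = ((2:ENNReal)^n)⁻¹ := by
    rw [ENNReal.zpow_neg, zpow_natCast]
  rw [h1, h2, ENNReal.ofReal_inv_of_pos (by positivity), ENNReal.ofReal_pow (by norm_num)]
  norm_num

/-- Bridge: computable convergence of a nonnegative series is equivalent to
having a computable sequence of indices past which the `ENNReal` tails are small. -/
lemma cc_iff_tail (a : ℕ → ℝ) (ha : ∀ k, 0 ≤ a k) :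
    ConvergesComputably a ↔
      ∃ s : ℕ → ℕ, Computable s ∧
        ∀ n, ∑' k, ENNReal.ofReal (a (k + s n)) ≤ (2:ENNReal)^(-(n:ℤ)) := by
  have hSmono : Monotone (fun m => ∑ k ∈ Finset.range m, a k) := by
    intro i j hij
    exact Finset.sum_le_sum_of_subset_of_nonneg (Finset.range_subset_range.2 hij)
      (fun k _ _ => ha k)
  constructor
  · rintro ⟨x, s, hs, hx⟩
    have hsum : Summable a := by
      apply summable_of_sum_range_le ha (c := x + 1)
      intro N
      calc ∑ i ∈ Finset.range N, a i ≤ ∑ i ∈ Finset.range (max N (s 0)), a i :=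
            hSmono (le_max_left _ _)
        _ ≤ x + 1 := by
            have := hx 0 (max N (s 0)) (le_max_right _ _)
            have h1 := abs_le.1 this
            simp only [zpow_neg, Nat.cast_zero, neg_zero, zpow_zero] at h1
            linarith [h1.1]
    -- x is the sum
    have htend : Tendsto (fun m => ∑ k ∈ Finset.range m, a k) atTop (nhds x) := by
      rw [Metric.tendsto_atTop]
      intro ε hε
      obtain ⟨n, hn⟩ := exists_pow_lt_of_lt_one hε (by norm_num : (1/2:ℝ) < 1)
      refine ⟨s n, fun m hm => ?_⟩
      have := hx n m hm
      rw [Real.dist_eq, abs_sub_comm]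
      calc |x - ∑ k ∈ Finset.range m, a k| ≤ (2:ℝ)^(-(n:ℤ)) := this
        _ = (1/2:ℝ)^n := two_zpow_eq n
        _ < ε := hn
    have hx' : x = ∑' k, a k :=
      tendsto_nhds_unique htend ((hasSum_iff_tendsto_nat_of_nonneg ha _).1 hsum.hasSum)
    refine ⟨s, hs, fun n => ?_⟩
    have htail : ∑' k, a (k + s n) = x - ∑ k ∈ Finset.range (s n), a k := by
      have := Summable.sum_add_tsum_nat_add (s n) hsum
      rw [← hx'] at this; linarith
    have hle : ∑' k, a (k + s n) ≤ (2:ℝ)^(-(n:ℤ)) := by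
      rw [htail]
      have := abs_le.1 (hx n (s n) le_rfl)
      linarith [this.2]
    calc ∑' k, ENNReal.ofReal (a (k + s n))
        = ENNReal.ofReal (∑' k, a (k + s n)) :=
          (ENNReal.ofReal_tsum_of_nonneg (fun k => ha _)
            ((summable_nat_add_iff (s n)).2 hsum)).symm
      _ ≤ ENNReal.ofReal ((2:ℝ)^(-(n:ℤ))) := ENNReal.ofReal_le_ofReal hle
      _ = (2:ENNReal)^(-(n:ℤ)) := two_zpow_ofReal n
  · rintro ⟨s, hs, hsm⟩
    -- summability
    have hfin : ∑' k, ENNReal.ofReal (a k) ≠ ⊤ := by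
      have hsplit := Summable.sum_add_tsum_nat_add' (M := ENNReal)
        (f := fun k => ENNReal.ofReal (a k)) (k := s 0) ENNReal.summable
      rw [← hsplit]
      refine ENNReal.add_ne_top.2 ⟨?_, ?_⟩
      · exact (ENNReal.sum_lt_top.2 (fun k _ => ENNReal.ofReal_lt_top)).ne
      · exact (lt_of_le_of_lt (hsm 0) (by norm_num)).ne
    have hsum : Summable a := by
      set A : ℕ → NNReal := fun k => ⟨a k, ha k⟩ with hA
      have hcoe : ∀ k, ENNReal.ofReal (a k) = (A k : ENNReal) := by
        intro k; rw [hA]; simp [ENNReal.ofReal, Real.toNNReal, ha k]; rfl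
      have : ∑' k, (A k : ENNReal) ≠ ⊤ := by
        rw [← tsum_congr hcoe]; exact hfin
      have := ENNReal.tsum_coe_ne_top_iff_summable.1 this
      have := NNReal.summable_coe.2 this
      convert this using 1
      exact funext fun k => rfl
    refine ⟨∑' k, a k, s, hs, fun n m hm => ?_⟩
    have hple : ∀ m', ∑ k ∈ Finset.range m', a k ≤ ∑' k, a k :=
      fun m' => Summable.sum_le_tsum _ (fun k _ => ha k) hsum
    rw [abs_of_nonneg (by linarith [hple m])]
    have htail : ∀ m', ∑' k, a k - ∑ k ∈ Finset.range m', a k = ∑' k, a (k + m') := by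
      intro m'; have := Summable.sum_add_tsum_nat_add m' hsum; linarith
    rw [htail m]
    have hmono2 : ∑' k, a (k + m) ≤ ∑' k, a (k + s n) := by
      rw [← htail m, ← htail (s n)]
      have := hSmono hm; linarith
    refine le_trans hmono2 ?_
    have hofr : ENNReal.ofReal (∑' k, a (k + s n)) ≤ (2:ENNReal)^(-(n:ℤ)) := by
      rw [ENNReal.ofReal_tsum_of_nonneg (fun k => ha _) ((summable_nat_add_iff (s n)).2 hsum)]
      exact hsm n
    have h2 : ((2:ENNReal)^(-(n:ℤ))).toReal = (2:ℝ)^(-(n:ℤ)) := by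
      rw [← two_zpow_ofReal, ENNReal.toReal_ofReal (le_of_lt (two_zpow_pos n))]
    calc ∑' k, a (k + s n)
        = (ENNReal.ofReal (∑' k, a (k + s n))).toReal := by
          rw [ENNReal.toReal_ofReal (tsum_nonneg (fun k => ha _))]
      _ ≤ ((2:ENNReal)^(-(n:ℤ))).toReal := by
          exact ENNReal.toReal_mono (two_zpow_ne_top n) hofr
      _ = (2:ℝ)^(-(n:ℤ)) := h2

end helpers

section core

/-- truncated series `∑_{k : M ≤ h k} 2^{-h k}` in `ℝ≥0∞`. -/
noncomputable def ebT (h : ℕ → ℕ) (M : ℕ) : ENNReal :=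
  ∑' k, if M ≤ h k then (2:ENNReal)^(-(h k:ℤ)) else 0

/-- truncated grouped series `∑_{j ≥ M} u j · 2^{-j}` in `ℝ≥0∞`. -/
noncomputable def QT (u : ℕ → ℕ) (M : ℕ) : ENNReal :=
  ∑' j, if M ≤ j then (u j : ENNReal) * (2:ENNReal)^(-(j:ℤ)) else 0

lemma fiber_lemma (h : ℕ → ℕ) (hfin : ∀ j, {k : ℕ | h k = j}.Finite) (M : ℕ) :
    ebT h M = QT (uf h) M := by
  classical
  unfold ebT QT
  set G : ℕ → ENNReal := fun j => if M ≤ j then (2:ENNReal)^(-(j:ℤ)) else 0 with hG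
  have hL : (∑' k, if M ≤ h k then (2:ENNReal)^(-(h k:ℤ)) else 0) = ∑' k, G (h k) := rfl
  rw [hL, ← (Equiv.sigmaFiberEquiv h).tsum_eq (fun k => G (h k))]
  have hp : ∀ p : Σ j, {k // h k = j}, G (h ((Equiv.sigmaFiberEquiv h) p)) = G p.1 := by
    rintro ⟨j, k, hk⟩
    simp [Equiv.sigmaFiberEquiv, hk]
  rw [tsum_congr hp]
  rw [ENNReal.tsum_sigma (fun j (_ : {k // h k = j}) => G j)]
  apply tsum_congr
  intro j
  haveI inst1 : Fintype {k // h k = j} := (hfin j).fintype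
  have hcount : (∑' (_ : {k // h k = j}), G j) = (Nat.card {k : ℕ | h k = j} : ENNReal) * G j := by
    have hcc : Nat.card {k : ℕ | h k = j} = Fintype.card {k // h k = j} :=
      @Nat.card_eq_fintype_card {k // h k = j} inst1
    rw [tsum_fintype, Finset.sum_const, Finset.card_univ, hcc, nsmul_eq_mul]
  rw [hcount]
  by_cases hj : M ≤ j <;> simp [uf, hG, hj]

lemma ebT_le (h : ℕ → ℕ) (M m : ℕ) :
    ebT h M ≤ (∑' k, (2:ENNReal)^(-(h (k+m):ℤ))) + (m:ENNReal) * (2:ENNReal)^(-(M:ℤ)) := by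
  classical
  unfold ebT
  set F : ℕ → ENNReal := fun k => if M ≤ h k then (2:ENNReal)^(-(h k:ℤ)) else 0 with hF
  have hsplit : (∑' k, F k) = ∑ k ∈ Finset.range m, F k + ∑' k, F (k+m) :=
    (Summable.sum_add_tsum_nat_add' ENNReal.summable).symm
  rw [show (∑' k, if M ≤ h k then (2:ENNReal)^(-(h k:ℤ)) else 0) = ∑' k, F k from rfl, hsplit,
    add_comm]
  apply add_le_add
  · apply ENNReal.tsum_le_tsum
    intro k
    by_cases hk : M ≤ h (k+m) <;> simp [hF, hk]
  · calc ∑ k ∈ Finset.range m, F k ≤ ∑ _k ∈ Finset.range m, (2:ENNReal)^(-(M:ℤ)) := by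
          apply Finset.sum_le_sum
          intro k _
          by_cases hk : M ≤ h k
          · simp only [hF, hk, if_true]
            exact ENNReal.zpow_le_of_le (by norm_num) (by omega)
          · simp [hF, hk]
      _ = (m:ENNReal) * (2:ENNReal)^(-(M:ℤ)) := by
          simp [Finset.sum_const, nsmul_eq_mul]

lemma tail_le_ebT (h : ℕ → ℕ) (hmono : Monotone h) (m : ℕ) :
    (∑' k, (2:ENNReal)^(-(h (k+m):ℤ))) ≤ ebT h (h m) := by
  classical
  set F : ℕ → ENNReal := fun k => if h m ≤ h k then (2:ENNReal)^(-(h k:ℤ)) else 0 with hF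
  have h1 : ∀ k, (2:ENNReal)^(-(h (k+m):ℤ)) = F (k+m) := by
    intro k
    simp [hF, hmono (Nat.le_add_left m k)]
  rw [tsum_congr h1]
  calc (∑' k, F (k+m)) ≤ ∑ k ∈ Finset.range m, F k + ∑' k, F (k+m) := le_add_self
    _ = ebT h (h m) := Summable.sum_add_tsum_nat_add' ENNReal.summable

lemma QT_eq_tail (u : ℕ → ℕ) (M : ℕ) :
    QT u M = ∑' j, (u (j+M) : ENNReal) * (2:ENNReal)^(-((j+M:ℕ):ℤ)) := by
  classical
  unfold QT
  set F : ℕ → ENNReal := fun j => if M ≤ j then (u j : ENNReal) * (2:ENNReal)^(-(j:ℤ)) else 0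
    with hF
  have hsplit : (∑' j, F j) = ∑ j ∈ Finset.range M, F j + ∑' j, F (j+M) :=
    (Summable.sum_add_tsum_nat_add' ENNReal.summable).symm
  rw [show (∑' j, if M ≤ j then (u j : ENNReal) * (2:ENNReal)^(-(j:ℤ)) else 0) = ∑' j, F j
      from rfl, hsplit]
  have hz : ∑ j ∈ Finset.range M, F j = 0 := by
    apply Finset.sum_eq_zero
    intro j hj
    have hjM := Finset.mem_range.1 hj
    have hnot : ¬ M ≤ j := by omega
    simp [hF, hnot]
  rw [hz, zero_add]
  apply tsum_congr
  intro j
  simp [hF, Nat.le_add_left]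

lemma QT_anti (u : ℕ → ℕ) {M M' : ℕ} (hMM : M ≤ M') : QT u M' ≤ QT u M := by
  unfold QT
  apply ENNReal.tsum_le_tsum
  intro j
  by_cases hj : M' ≤ j
  · simp [hj, le_trans hMM hj]
  · simp [hj]

lemma mul_two_zpow_le (m c : ℕ) :
    (m:ENNReal) * (2:ENNReal)^(-((c+m:ℕ):ℤ)) ≤ (2:ENNReal)^(-(c:ℤ)) := by
  have hc : ((c+m:ℕ):ℤ) = (c:ℤ) + (m:ℤ) := by push_cast; ring
  rw [hc, neg_add, ENNReal.zpow_add (by norm_num) (by norm_num)]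
  have hm2 : (m:ENNReal) * (2:ENNReal)^(-(m:ℤ)) ≤ 1 := by
    have hm : (m:ENNReal) ≤ (2:ENNReal)^(m:ℤ) := by
      calc (m:ENNReal) ≤ ((2^m : ℕ) : ENNReal) := by
            exact_mod_cast Nat.le_of_lt (Nat.lt_two_pow_self (n := m))
        _ = (2:ENNReal)^(m:ℤ) := by push_cast; rw [zpow_natCast]
    calc (m:ENNReal) * (2:ENNReal)^(-(m:ℤ)) ≤ (2:ENNReal)^(m:ℤ) * (2:ENNReal)^(-(m:ℤ)) := by
          exact mul_le_mul_left hm _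
      _ = (2:ENNReal)^((m:ℤ) + -(m:ℤ)) := (ENNReal.zpow_add (by norm_num) (by norm_num) _ _).symm
      _ = 1 := by simp
  calc (m:ENNReal) * ((2:ENNReal)^(-(c:ℤ)) * (2:ENNReal)^(-(m:ℤ)))
      = (2:ENNReal)^(-(c:ℤ)) * ((m:ENNReal) * (2:ENNReal)^(-(m:ℤ))) := by ring
    _ ≤ (2:ENNReal)^(-(c:ℤ)) * 1 := mul_le_mul_right hm2 _
    _ = (2:ENNReal)^(-(c:ℤ)) := mul_one _

lemma two_zpow_half_add (n : ℕ) :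
    (2:ENNReal)^(-((n+1:ℕ):ℤ)) + (2:ENNReal)^(-((n+1:ℕ):ℤ)) = (2:ENNReal)^(-(n:ℤ)) := by
  rw [← two_mul]
  have hc : ((n+1:ℕ):ℤ) = (n:ℤ) + 1 := by push_cast; ring
  rw [hc, neg_add, ENNReal.zpow_add (by norm_num) (by norm_num)]
  calc (2:ENNReal) * ((2:ENNReal)^(-(n:ℤ)) * (2:ENNReal)^(-(1:ℤ)))
      = (2:ENNReal)^(-(n:ℤ)) * ((2:ENNReal)^(1:ℤ) * (2:ENNReal)^(-(1:ℤ))) := by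
        rw [zpow_one]; ring
    _ = (2:ENNReal)^(-(n:ℤ)) := by
        rw [← ENNReal.zpow_add (by norm_num) (by norm_num)]
        simp

end core

section main

theorem primrec_pow' : Primrec₂ ((· ^ ·) : ℕ → ℕ → ℕ) := Primrec₂.unpaired'.1 Nat.Primrec.pow

/-- From computable convergence of a rearranged series to computable convergence of
the grouped series. -/
lemma lemI (f h : ℕ → ℕ) (hfin : ∀ j, {k : ℕ | h k = j}.Finite)
    (hcard : uf h = uf f)
    (hcc : ConvergesComputably (fun k => (2:ℝ)^(-(h k:ℤ)))) :
    ConvergesComputably (fun k => (uf f k : ℝ) * (2:ℝ)^(-(k:ℤ))) := by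
  rw [cc_iff_tail _ (fun k => by positivity)] at hcc
  rw [cc_iff_tail _ (fun k => by positivity)]
  obtain ⟨s, hs, hsm⟩ := hcc
  refine ⟨fun n => (n+1) + s (n+1), ?_, fun n => ?_⟩
  · have h1 : Computable (fun n : ℕ => n + 1) := Primrec.succ.to_comp
    exact Computable₂.comp Primrec.nat_add.to_comp h1 (hs.comp h1)
  · set m := s (n+1) with hm
    set M := (n+1) + s (n+1) with hM
    have hofC : (∑' j, ENNReal.ofReal ((uf f (j + M) : ℝ) * (2:ℝ)^(-((j + M : ℕ):ℤ))))
        = QT (uf f) M := by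
      rw [QT_eq_tail]
      apply tsum_congr
      intro j
      rw [ENNReal.ofReal_mul (by positivity), ENNReal.ofReal_natCast, two_zpow_ofReal]
    rw [hofC, ← hcard, ← fiber_lemma h hfin M]
    have h2 : (∑' k, (2:ENNReal)^(-(h (k+m):ℤ))) ≤ (2:ENNReal)^(-((n+1:ℕ):ℤ)) := by
      have := hsm (n+1)
      rw [tsum_congr (fun k => (two_zpow_ofReal (h (k + s (n+1)))))] at this
      exact this
    have h3 : (m:ENNReal) * (2:ENNReal)^(-(M:ℤ)) ≤ (2:ENNReal)^(-((n+1:ℕ):ℤ)) := by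
      have := mul_two_zpow_le m (n+1)
      rwa [← hM] at this
    calc ebT h M ≤ (∑' k, (2:ENNReal)^(-(h (k+m):ℤ))) + (m:ENNReal) * (2:ENNReal)^(-(M:ℤ)) :=
          ebT_le h M m
      _ ≤ (2:ENNReal)^(-((n+1:ℕ):ℤ)) + (2:ENNReal)^(-((n+1:ℕ):ℤ)) := add_le_add h2 h3
      _ = (2:ENNReal)^(-(n:ℤ)) := two_zpow_half_add n

/-- From computable convergence of the grouped series to computable convergence of the
non-decreasing rearrangement. -/
lemma lemII (f fstar : ℕ → ℕ) (hmono : Monotone fstar)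
    (hfinstar : ∀ j, {k : ℕ | fstar k = j}.Finite)
    (hu : uf fstar = uf f)
    (hcc : ConvergesComputably (fun k => (uf f k : ℝ) * (2:ℝ)^(-(k:ℤ)))) :
    ConvergesComputably (fun k => (2:ℝ)^(-(fstar k:ℤ))) := by
  rw [cc_iff_tail _ (fun k => by positivity)] at hcc
  rw [cc_iff_tail _ (fun k => by positivity)]
  obtain ⟨t, ht, htm⟩ := hcc
  have htm' : ∀ n, QT (uf f) (t n) ≤ (2:ENNReal)^(-(n:ℤ)) := by
    intro n
    rw [QT_eq_tail]
    refine le_trans (le_of_eq (tsum_congr (fun j => ?_))) (htm n)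
    rw [ENNReal.ofReal_mul (by positivity), ENNReal.ofReal_natCast, two_zpow_ofReal]
  -- the total sum is finite
  have hX : ebT fstar 0 ≠ ⊤ := by
    rw [fiber_lemma fstar hfinstar 0, hu]
    have hsplit : QT (uf f) 0
        = ∑ j ∈ Finset.range (t 0), (uf f j : ENNReal) * (2:ENNReal)^(-(j:ℤ))
          + ∑' j, (uf f (j + t 0) : ENNReal) * (2:ENNReal)^(-((j + t 0 : ℕ):ℤ)) := by
      rw [QT_eq_tail (uf f) 0]
      have e1 : (∑' j, (uf f (j+0) : ENNReal) * (2:ENNReal)^(-((j+0:ℕ):ℤ)))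
          = ∑' j, (uf f j : ENNReal) * (2:ENNReal)^(-(j:ℤ)) := by
        apply tsum_congr; intro j; norm_num
      rw [e1, ← Summable.sum_add_tsum_nat_add' (f := fun j => (uf f j : ENNReal) * (2:ENNReal)^(-(j:ℤ)))
        (k := t 0) ENNReal.summable]
    rw [hsplit]
    apply ENNReal.add_ne_top.2
    constructor
    · refine (ENNReal.sum_lt_top.2 (fun j _ => ?_)).ne
      exact ENNReal.mul_lt_top (ENNReal.natCast_lt_top _)
        (ENNReal.zpow_lt_top (by norm_num) (by norm_num) _)
    · have := le_trans (le_of_eq (QT_eq_tail (uf f) (t 0)).symm) (htm' 0)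
      exact (lt_of_le_of_lt this (by norm_num)).ne
  obtain ⟨K, hK⟩ := ENNReal.exists_nat_gt hX
  -- the counting estimate
  have hcast : ∀ M : ℕ, ((2^M : ℕ) : ENNReal) = (2:ENNReal)^(M:ℤ) := by
    intro M; push_cast; rw [zpow_natCast]
  have hclaim : ∀ n m : ℕ, K * 2^(t n) ≤ m → t n ≤ fstar m := by
    intro n m hm
    by_contra hlt
    push_neg at hlt
    set M := t n with hMdef
    have hall : ∀ k ∈ Finset.range (m+1), (2:ENNReal)^(-(M:ℤ)) ≤ (2:ENNReal)^(-(fstar k:ℤ)) := by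
      intro k hk
      apply ENNReal.zpow_le_of_le (by norm_num)
      have : fstar k ≤ fstar m := hmono (Nat.lt_succ_iff.1 (Finset.mem_range.1 hk))
      omega
    have h1 : ((m+1:ℕ):ENNReal) * (2:ENNReal)^(-(M:ℤ)) ≤ ebT fstar 0 := by
      calc ((m+1:ℕ):ENNReal) * (2:ENNReal)^(-(M:ℤ))
          = ∑ _k ∈ Finset.range (m+1), (2:ENNReal)^(-(M:ℤ)) := by
            simp [Finset.sum_const, nsmul_eq_mul]
        _ ≤ ∑ k ∈ Finset.range (m+1), (2:ENNReal)^(-(fstar k:ℤ)) := Finset.sum_le_sum hall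
        _ ≤ ∑' k, (2:ENNReal)^(-(fstar k:ℤ)) := ENNReal.sum_le_tsum _
        _ = ebT fstar 0 := by
            unfold ebT
            apply tsum_congr
            intro k
            simp
    have h2 : (K:ENNReal) ≤ ((m+1:ℕ):ENNReal) * (2:ENNReal)^(-(M:ℤ)) := by
      have hKm : ((K * 2^M : ℕ):ENNReal) ≤ ((m+1:ℕ):ENNReal) := by
        exact_mod_cast Nat.le_succ_of_le hm
      calc (K:ENNReal) = (K:ENNReal) * ((2:ENNReal)^(M:ℤ) * (2:ENNReal)^(-(M:ℤ))) := by
            rw [← ENNReal.zpow_add (by norm_num) (by norm_num)]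
            simp
        _ = (((K * 2^M : ℕ)):ENNReal) * (2:ENNReal)^(-(M:ℤ)) := by
            push_cast
            rw [← hcast M]
            push_cast
            ring
        _ ≤ ((m+1:ℕ):ENNReal) * (2:ENNReal)^(-(M:ℤ)) := mul_le_mul_left hKm _
    exact absurd (lt_of_le_of_lt (le_trans h2 h1) hK) (lt_irrefl _)
  refine ⟨fun n => K * 2^(t n), ?_, fun n => ?_⟩
  · have hp : Primrec (fun a : ℕ => K * 2 ^ a) :=
      Primrec.nat_mul.comp (Primrec.const K) (primrec_pow'.comp (Primrec.const 2) Primrec.id)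
    exact hp.to_comp.comp ht
  · set m := K * 2^(t n) with hm
    have e1 : (∑' k, ENNReal.ofReal ((2:ℝ)^(-(fstar (k + m):ℤ))))
        = ∑' k, (2:ENNReal)^(-(fstar (k + m):ℤ)) :=
      tsum_congr (fun k => two_zpow_ofReal (fstar (k + m)))
    rw [e1]
    calc (∑' k, (2:ENNReal)^(-(fstar (k + m):ℤ))) ≤ ebT fstar (fstar m) :=
          tail_le_ebT fstar hmono m
      _ = QT (uf f) (fstar m) := by rw [fiber_lemma fstar hfinstar, hu]
      _ ≤ QT (uf f) (t n) := QT_anti _ (hclaim n m le_rfl)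
      _ ≤ (2:ENNReal)^(-(n:ℤ)) := htm' n

end main


/-- equivalence of computable convergence of some rearrangement, of the
non-decreasing rearrangement, and of the grouped series. -/
theorem stmt1 (f : ℕ → ℕ) (hf : TendsToInfinity f)
    (fstar : ℕ → ℕ) (hmono : Monotone fstar) (hunb : ∀ c : ℕ, ∃ n : ℕ, c < fstar n)
    (hu : uf fstar = uf f) :
    ((∃ σ : ℕ → ℕ, Function.Bijective σ ∧
        ConvergesComputably (fun k => (2:ℝ)^(-(f (σ k) : ℤ)))) ↔
      ConvergesComputably (fun k => (2:ℝ)^(-(fstar k : ℤ)))) ∧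
    (ConvergesComputably (fun k => (2:ℝ)^(-(fstar k : ℤ))) ↔
      ConvergesComputably (fun k => (uf f k : ℝ) * (2:ℝ)^(-(k:ℤ)))) := by
  have hffin : ∀ j, {k : ℕ | f k = j}.Finite := by
    intro j
    obtain ⟨m, hm⟩ := hf j
    apply Set.Finite.subset (Set.finite_Iio m)
    intro k hk
    simp only [Set.mem_setOf_eq] at hk
    simp only [Set.mem_Iio]
    by_contra hkm
    push_neg at hkm
    have := hm k hkm
    omega
  have hsfin : ∀ j, {k : ℕ | fstar k = j}.Finite := by
    intro j
    obtain ⟨m, hm⟩ := hunb j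
    apply Set.Finite.subset (Set.finite_Iio m)
    intro k hk
    simp only [Set.mem_setOf_eq] at hk
    simp only [Set.mem_Iio]
    by_contra hkm
    push_neg at hkm
    have := hmono hkm
    omega
  have part2 : ConvergesComputably (fun k => (2:ℝ)^(-(fstar k : ℤ))) ↔
      ConvergesComputably (fun k => (uf f k : ℝ) * (2:ℝ)^(-(k:ℤ))) :=
    ⟨fun hb => lemI f fstar hsfin hu hb, fun hc => lemII f fstar hmono hsfin hu hc⟩
  refine ⟨⟨?_, ?_⟩, part2⟩
  · rintro ⟨σ, hbij, hcc⟩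
    apply part2.2
    have hfin' : ∀ j, {k : ℕ | f (σ k) = j}.Finite := by
      intro j
      have : {k : ℕ | f (σ k) = j} = σ ⁻¹' {k : ℕ | f k = j} := rfl
      rw [this]
      exact Set.Finite.preimage hbij.injective.injOn (hffin j)
    have hcard' : uf (fun k => f (σ k)) = uf f := by
      funext j
      exact Nat.card_congr (Equiv.subtypeEquiv (Equiv.ofBijective σ hbij) (fun k => Iff.rfl))
    exact lemI f (fun k => f (σ k)) hfin' hcard' hcc
  · intro hb
    -- build a bijection σ with f ∘ σ = fstar
    haveI : ∀ j, Finite {k // fstar k = j} := fun j => (hsfin j).to_subtype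
    haveI : ∀ j, Finite {k // f k = j} := fun j => (hffin j).to_subtype
    have hcards : ∀ j, Nat.card {k // fstar k = j} = Nat.card {k // f k = j} :=
      fun j => congrFun hu j
    have fe : ∀ j, {k // fstar k = j} ≃ {k // f k = j} :=
      fun j => (Finite.card_eq.mp (hcards j)).some
    set σ : ℕ ≃ ℕ :=
      (Equiv.sigmaFiberEquiv fstar).symm.trans
        ((Equiv.sigmaCongrRight fe).trans (Equiv.sigmaFiberEquiv f)) with hσ
    have hfσ : ∀ k, f (σ k) = fstar k := by
      intro k
      have : σ k = (fe (fstar k) ⟨k, rfl⟩).1 := rfl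
      rw [this]
      exact (fe (fstar k) ⟨k, rfl⟩).2
    refine ⟨σ, σ.bijective, ?_⟩
    have heq : (fun k => (2:ℝ)^(-(f (σ k) : ℤ))) = (fun k => (2:ℝ)^(-(fstar k : ℤ))) :=
      funext fun k => by rw [hfσ k]
    rw [heq]
    exact hb
end

section
/- Every regular real number is reordered computable. -/
open Filter

namespace S3

open Filter

/-! ### Computability helpers -/

lemma computable_count {p : ℕ → ℕ → Prop} [I : ∀ a n, Decidable (p a n)]
    (hp : Computable₂ fun a n => decide (p a n)) :
    Computable₂ fun a n => Nat.count (p a) n := by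
  have h : Computable fun q : ℕ × ℕ =>
      Nat.rec (motive := fun _ => ℕ) 0
        (fun y IH => IH + cond (decide (p q.1 y)) 1 0) q.2 :=
    Computable.nat_rec Computable.snd (Computable.const 0)
      ((Primrec.nat_add.to_comp.comp₂
        (Computable.snd.comp Computable.snd).to₂
        ((Computable.cond
          (hp.comp (Computable.fst.comp Computable.fst) (Computable.fst.comp Computable.snd))
          (Computable.const 1) (Computable.const 0)).to₂)))
  refine h.of_eq fun q => ?_
  induction q.2 with
  | zero => simp [Nat.count_zero]
  | succ n ih =>
      simp only [Nat.count_succ, ih]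
      by_cases hpn : p q.1 n <;> simp [hpn]

/-! ### The construction -/

variable (N : ℕ) (G : ℕ → ℕ → ℕ)

def rowFresh (a b : ℕ) : Prop := ∀ b' < b, G a b' ≠ G a b

instance (a b : ℕ) : Decidable (rowFresh G a b) := Nat.decidableBallLT _ _

def fresh (t : ℕ) : Prop := t.unpair.1 < N ∧ rowFresh G t.unpair.1 t.unpair.2

instance (t : ℕ) : Decidable (fresh N G t) := by unfold fresh; infer_instance

def dead (t : ℕ) : Prop := ¬ fresh N G t ∨ t = 0

instance (t : ℕ) : Decidable (dead N G t) := by unfold dead; infer_instance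

def rnk (t : ℕ) : ℕ := Nat.count (dead N G) t

def ff (k : ℕ) : ℕ :=
  if dead N G k.unpair.1 then G 0 0 + 3 + rnk N G k.unpair.1 + k.unpair.2
  else G k.unpair.1.unpair.1 k.unpair.1.unpair.2 + 2 + k.unpair.2

variable {N G}

lemma count_eq_zero_iff (p : ℕ → Prop) [DecidablePred p] (n : ℕ) :
    Nat.count p n = 0 ↔ ∀ m < n, ¬ p m := by
  induction n with
  | zero => simp
  | succ n ih =>
      rw [Nat.count_succ]
      constructor
      · intro h m hm
        have h1 : Nat.count p n = 0 := by omega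
        have h2 : ¬ p n := by intro hp; rw [if_pos hp] at h; omega
        rcases Nat.lt_succ_iff_lt_or_eq.mp hm with hm | hm
        · exact (ih.mp h1) m hm
        · subst hm; exact h2
      · intro h
        have h1 : Nat.count p n = 0 := ih.mpr fun m hm => h m (hm.trans n.lt_succ_self)
        have h2 : ¬ p n := h n n.lt_succ_self
        simp [h1, h2]

section Comp

variable (hG : Computable₂ G)
include hG

lemma computable_freshB : Computable fun t => decide (fresh N G t) := by
  have beqC : Computable₂ fun (x y : ℕ) => x == y := Primrec.beq.to_comp
  have andC : Computable₂ fun (x y : Bool) => (x && y) := Primrec.and.to_comp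
  have ltC : Computable₂ fun (x y : ℕ) => decide (x < y) := Primrec.nat_lt.decide.to_comp
  have hcnt : Computable fun t : ℕ =>
      Nat.count (fun b' => G t.unpair.1 b' = G t.unpair.1 t.unpair.2) t.unpair.2 := by
    have := computable_count (p := fun (t b' : ℕ) => G t.unpair.1 b' = G t.unpair.1 t.unpair.2)
      ((Primrec.eq.decide.to_comp).comp₂
        (hG.comp ((Computable.fst.comp (Primrec.unpair.to_comp.comp Computable.fst)))
          Computable.snd).to₂
        (hG.comp (Computable.fst.comp (Primrec.unpair.to_comp.comp Computable.fst))
          (Computable.snd.comp (Primrec.unpair.to_comp.comp Computable.fst))).to₂)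
    exact this.comp Computable.id (Computable.snd.comp Primrec.unpair.to_comp)
  have hB : Computable fun t : ℕ =>
      (decide (t.unpair.1 < N) &&
        (Nat.count (fun b' => G t.unpair.1 b' = G t.unpair.1 t.unpair.2) t.unpair.2 == 0)) := by
    have h1 : Computable fun t : ℕ => decide (t.unpair.1 < N) :=
      ltC.comp (Computable.fst.comp Primrec.unpair.to_comp) (Computable.const N)
    have h2 : Computable fun t : ℕ =>
        (Nat.count (fun b' => G t.unpair.1 b' = G t.unpair.1 t.unpair.2) t.unpair.2 == 0) :=
      beqC.comp hcnt (Computable.const 0)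
    exact andC.comp h1 h2
  refine hB.of_eq fun t => ?_
  have hiff : fresh N G t ↔ t.unpair.1 < N ∧
      Nat.count (fun b' => G t.unpair.1 b' = G t.unpair.1 t.unpair.2) t.unpair.2 = 0 := by
    unfold fresh rowFresh
    rw [count_eq_zero_iff]
  by_cases h1 : t.unpair.1 < N <;>
    by_cases h2 : Nat.count (fun b' => G t.unpair.1 b' = G t.unpair.1 t.unpair.2) t.unpair.2 = 0 <;>
    simp [h1, h2, hiff]

lemma computable_deadB : Computable fun t => decide (dead N G t) := by
  have hB : Computable fun t : ℕ => (!(decide (fresh N G t)) || (t == 0)) :=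
    (Primrec.or.to_comp : Computable₂ fun (x y : Bool) => (x || y)).comp
      ((Primrec.not.to_comp : Computable (fun b => !b)).comp (computable_freshB (N := N) hG))
      ((Primrec.beq.to_comp : Computable₂ fun (x y : ℕ) => x == y).comp
        Computable.id (Computable.const 0))
  refine hB.of_eq fun t => ?_
  unfold dead
  by_cases h1 : fresh N G t <;> by_cases h2 : t = 0 <;> simp [h1, h2]

lemma computable_rnk : Computable (rnk N G) := by
  have := computable_count (p := fun (_ t : ℕ) => dead N G t)
    ((computable_deadB (N := N) hG).comp Computable.snd)
  exact (this.comp Computable.id Computable.id).of_eq fun t => rfl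

lemma computable_ff : Computable (ff N G) := by
  have u1 : Computable fun k : ℕ => k.unpair.1 := Computable.fst.comp Primrec.unpair.to_comp
  have u2 : Computable fun k : ℕ => k.unpair.2 := Computable.snd.comp Primrec.unpair.to_comp
  have addC : Computable₂ fun (x y : ℕ) => x + y := Primrec.nat_add.to_comp
  have hA : Computable fun k : ℕ => G 0 0 + 3 + rnk N G k.unpair.1 + k.unpair.2 :=
    addC.comp (addC.comp (Computable.const (G 0 0 + 3))
        ((computable_rnk (N := N) hG).comp u1)) u2
  have hB : Computable fun k : ℕ => G k.unpair.1.unpair.1 k.unpair.1.unpair.2 + 2 + k.unpair.2 :=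
    addC.comp (addC.comp
        (hG.comp (Computable.fst.comp (Primrec.unpair.to_comp.comp u1))
          (Computable.snd.comp (Primrec.unpair.to_comp.comp u1)))
        (Computable.const 2)) u2
  have := Computable.cond ((computable_deadB (N := N) hG).comp u1) hA hB
  refine this.of_eq fun k => ?_
  unfold ff
  by_cases h : dead N G k.unpair.1 <;> simp [h]

end Comp

/-! ### Summation identities in `ℝ≥0∞` -/

noncomputable def w (m : ℕ) : ENNReal := (2:ENNReal)⁻¹ ^ m

lemma w_col (c : ℕ) : ∑' j : ℕ, w (c + 1 + j) = w c := by
  have h2 : ∑' j : ℕ, w j = 2 := by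
    simp only [w]
    rw [ENNReal.tsum_geometric, ENNReal.one_sub_inv_two, inv_inv]
  calc ∑' j : ℕ, w (c+1+j) = ∑' j : ℕ, w (c+1) * w j := by
        refine tsum_congr fun j => ?_; simp [w, pow_add]
    _ = w (c+1) * ∑' j, w j := ENNReal.tsum_mul_left
    _ = w c * (2⁻¹ * 2) := by rw [h2]; simp only [w, pow_succ]; ring
    _ = w c := by rw [ENNReal.inv_mul_cancel two_ne_zero ENNReal.ofNat_ne_top, mul_one]

def pEquiv : ℕ × ℕ ≃ ℕ :=
  ⟨fun p => Nat.pair p.1 p.2, fun n => n.unpair, fun p => by simp, fun n => by simp⟩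

lemma tsum_pair (F : ℕ → ENNReal) : ∑' k, F k = ∑' (t : ℕ) (j : ℕ), F (Nat.pair t j) := by
  rw [← pEquiv.tsum_eq F]
  exact ENNReal.tsum_prod'

lemma sumf : Summable (fun n : ℕ => (2:ℝ)^(-(n:ℤ)-1)) := by
  have he : (fun n : ℕ => (2:ℝ)^(-(n:ℤ)-1)) = fun n => 2⁻¹ * (2⁻¹:ℝ)^n := by
    funext n
    rw [show (-(n:ℤ)-1) = -((n+1 : ℕ) : ℤ) by push_cast; ring, zpow_neg, zpow_natCast,
      ← inv_pow, pow_succ]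
    ring
  rw [he]
  exact (summable_geometric_of_lt_one (by norm_num) (by norm_num)).mul_left _

lemma xA_nonneg (A : Set ℕ) : 0 ≤ xA A :=
  tsum_nonneg fun n => le_of_lt (zpow_pos (by norm_num) _)

lemma ofReal_w (m : ℕ) : ENNReal.ofReal ((2:ℝ)^(-(m:ℤ)-1)) = w (m + 1) := by
  rw [show (-(m:ℤ)-1) = -((m+1 : ℕ) : ℤ) by push_cast; ring, zpow_neg, zpow_natCast, ← inv_pow]
  rw [w, ENNReal.ofReal_pow (by norm_num)]
  congr 1
  rw [ENNReal.ofReal_inv_of_pos (by norm_num)]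
  norm_num

lemma ofReal_xA (A : Set ℕ) : ENNReal.ofReal (xA A) = ∑' n : A, w (↑n + 1) := by
  erw [xA, ENNReal.ofReal_tsum_of_nonneg
    (fun n => le_of_lt (zpow_pos (by norm_num) _)) (sumf.subtype A)]
  exact tsum_congr fun n => ofReal_w _

variable {N : ℕ} {G : ℕ → ℕ → ℕ}

lemma dead_infinite (hN : 0 < N) : {t | dead N G t}.Infinite := by
  refine Set.infinite_of_injective_forall_mem (f := fun b : ℕ => Nat.pair N b) ?_ ?_
  · intro b b' h
    have := congrArg (fun n => n.unpair.2) h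
    simpa using this
  · intro b
    left
    intro hf
    have := hf.1
    simp [Nat.unpair_pair] at this

lemma fresh_zero (hN : 0 < N) : fresh N G 0 := by
  refine ⟨?_, fun b' hb' => ?_⟩
  · simpa [Nat.unpair_zero] using hN
  · simp [Nat.unpair_zero] at hb'

lemma rowFresh_injective {a b b' : ℕ} (h : rowFresh G a b) (h' : rowFresh G a b')
    (he : G a b = G a b') : b = b' := by
  rcases lt_trichotomy b b' with hlt | heq | hlt
  · exact absurd he (h' b hlt)
  · exact heq
  · exact absurd he.symm (h b' hlt)

lemma col_sum (t : ℕ) : ∑' j : ℕ, w (ff N G (Nat.pair t j)) =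
    if dead N G t then w (G 0 0 + 2 + rnk N G t)
    else w (G t.unpair.1 t.unpair.2 + 1) := by
  by_cases h : dead N G t
  · rw [if_pos h]
    have he : ∀ j : ℕ, ff N G (Nat.pair t j) = (G 0 0 + 2 + rnk N G t) + 1 + j := by
      intro j; unfold ff; rw [Nat.unpair_pair]; simp only [if_pos h]; try omega
    rw [tsum_congr fun j => congrArg w (he j), w_col]
  · rw [if_neg h]
    have he : ∀ j : ℕ, ff N G (Nat.pair t j) = (G t.unpair.1 t.unpair.2 + 1) + 1 + j := by
      intro j; unfold ff; rw [Nat.unpair_pair]; simp only [if_neg h]; try omega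
    rw [tsum_congr fun j => congrArg w (he j), w_col]

lemma dead_sum (hN : 0 < N) :
    ∑' t : {t | dead N G t}, w (G 0 0 + 2 + rnk N G ↑t) = w (G 0 0 + 1) := by
  have hinf := dead_infinite (G := G) hN
  let e : ℕ ≃ {t | dead N G t} :=
    ⟨fun r => ⟨Nat.nth (dead N G) r, Nat.nth_mem_of_infinite hinf r⟩,
     fun t => Nat.count (dead N G) ↑t,
     fun r => Nat.count_nth_of_infinite hinf r,
     fun t => Subtype.ext (Nat.nth_count t.2)⟩
  rw [← e.tsum_eq (fun t : {t | dead N G t} => w (G 0 0 + 2 + rnk N G ↑t))]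
  have hr : ∀ r : ℕ, rnk N G ↑(e r) = r := fun r => by
    unfold rnk
    exact Nat.count_nth_of_infinite hinf r
  calc ∑' r : ℕ, w (G 0 0 + 2 + rnk N G ↑(e r)) = ∑' r : ℕ, w ((G 0 0 + 1) + 1 + r) := by
        refine tsum_congr fun r => congrArg w ?_
        rw [hr r]
    _ = w (G 0 0 + 1) := w_col _

lemma compl_dead : {t | dead N G t}ᶜ = {t | fresh N G t} \ {0} := by
  ext t
  simp only [Set.mem_compl_iff, Set.mem_setOf_eq, Set.mem_diff, Set.mem_singleton_iff, dead]
  tauto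

lemma row_sum {a : ℕ} (ha : a < N) :
    ∑' b : ℕ, Set.indicator {t | fresh N G t}
      (fun t => w (G t.unpair.1 t.unpair.2 + 1)) (Nat.pair a b) =
    ENNReal.ofReal (xA (Set.range (G a))) := by
  classical
  have hterm : ∀ b : ℕ, Set.indicator {t | fresh N G t}
      (fun t => w (G t.unpair.1 t.unpair.2 + 1)) (Nat.pair a b)
      = Set.indicator {b | rowFresh G a b} (fun b => w (G a b + 1)) b := by
    intro b
    by_cases hb : rowFresh G a b
    · rw [Set.indicator_of_mem (show Nat.pair a b ∈ {t | fresh N G t} from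
          (by simpa [fresh, Nat.unpair_pair] using ⟨ha, hb⟩)),
        Set.indicator_of_mem (show b ∈ {b | rowFresh G a b} from hb)]
      simp [Nat.unpair_pair]
    · rw [Set.indicator_of_notMem (show Nat.pair a b ∉ {t | fresh N G t} from
          (by simpa [fresh, Nat.unpair_pair] using fun _ => hb)),
        Set.indicator_of_notMem (show b ∉ {b | rowFresh G a b} from hb)]
  rw [tsum_congr hterm, ← tsum_subtype, ofReal_xA]
  have hbij : Function.Bijective (fun b : {b | rowFresh G a b} =>
      (⟨G a ↑b, ⟨↑b, rfl⟩⟩ : Set.range (G a))) := by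
    constructor
    · intro b b' hbb
      exact Subtype.ext (rowFresh_injective b.2 b'.2 (congrArg Subtype.val hbb))
    · rintro ⟨m, hm⟩
      have hex : ∃ b, G a b = m := hm
      refine ⟨⟨Nat.find hex, ?_⟩, Subtype.ext (Nat.find_spec hex)⟩
      intro b' hb' hEq
      exact Nat.find_min hex hb' (by rw [hEq, Nat.find_spec hex])
  exact ((Equiv.ofBijective _ hbij).tsum_eq fun n : Set.range (G a) => w (↑n + 1))

lemma row_sum_zero {a : ℕ} (ha : ¬ a < N) (b : ℕ) :
    Set.indicator {t | fresh N G t}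
      (fun t => w (G t.unpair.1 t.unpair.2 + 1)) (Nat.pair a b) = 0 := by
  apply Set.indicator_of_notMem
  intro hm
  exact ha (by simpa [Nat.unpair_pair] using hm.1)

/-- Main sum identity in `ℝ≥0∞`. -/
lemma tsum_w_ff (hN : 0 < N) : ∑' k, w (ff N G k) =
    ∑ a ∈ Finset.range N, ENNReal.ofReal (xA (Set.range (G a))) := by
  classical
  rw [tsum_pair]
  rw [tsum_congr fun t => col_sum (N := N) (G := G) t]
  rw [← Summable.tsum_add_tsum_compl (s := {t | dead N G t})
    (f := fun t => if dead N G t then w (G 0 0 + 2 + rnk N G t)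
      else w (G t.unpair.1 t.unpair.2 + 1)) ENNReal.summable ENNReal.summable]
  rw [tsum_congr fun t : ({t | dead N G t} : Set ℕ) => if_pos (show dead N G ↑t from t.2)]
  rw [dead_sum hN]
  rw [tsum_congr fun t : ({t | dead N G t}ᶜ : Set ℕ) => if_neg (show ¬ dead N G ↑t from t.2)]
  rw [compl_dead]
  have h0F : ({0} : Set ℕ) ⊆ {t | fresh N G t} := by
    intro t ht
    rw [Set.mem_singleton_iff] at ht
    subst ht
    exact fresh_zero hN
  have hunion : {t | fresh N G t} = {0} ∪ ({t | fresh N G t} \ {0}) :=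
    (Set.union_diff_cancel h0F).symm
  have hFsum : ∑' t : ({t | fresh N G t} : Set ℕ), w (G (↑t : ℕ).unpair.1 (↑t : ℕ).unpair.2 + 1)
      = w (G 0 0 + 1) +
        ∑' t : ({t | fresh N G t} \ {0} : Set ℕ), w (G (↑t : ℕ).unpair.1 (↑t : ℕ).unpair.2 + 1) := by
    have hud := Summable.tsum_union_disjoint (f := fun t : ℕ => w (G t.unpair.1 t.unpair.2 + 1))
      (s := ({0} : Set ℕ)) (t := {t | fresh N G t} \ {0})
      Set.disjoint_sdiff_right ENNReal.summable ENNReal.summable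
    conv_lhs => rw [hunion]
    rw [hud, tsum_singleton 0 (fun t : ℕ => w (G t.unpair.1 t.unpair.2 + 1))]
    simp [Nat.unpair_zero]
  rw [← hFsum]
  rw [tsum_subtype {t | fresh N G t} (fun t : ℕ => w (G t.unpair.1 t.unpair.2 + 1))]
  rw [tsum_pair]
  rw [tsum_congr fun a => tsum_congr fun b => rfl]
  have hrows : ∀ a : ℕ, ∑' b : ℕ, Set.indicator {t | fresh N G t}
      (fun t => w (G t.unpair.1 t.unpair.2 + 1)) (Nat.pair a b)
      = if a < N then ENNReal.ofReal (xA (Set.range (G a))) else 0 := by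
    intro a
    by_cases ha : a < N
    · rw [if_pos ha, row_sum ha]
    · rw [if_neg ha, tsum_congr (row_sum_zero ha), tsum_zero]
  rw [tsum_congr hrows]
  rw [tsum_eq_sum (s := Finset.range N)
    (fun a ha => if_neg (by simpa using fun h => ha (Finset.mem_range.mpr h)))]
  exact Finset.sum_congr rfl fun a ha => if_pos (Finset.mem_range.mp ha)

/-! ### From `ℝ≥0∞` to a real `HasSum` -/

lemma hasSum_ff (hN : 0 < N) {x : ℝ}
    (hx : x = ∑ a ∈ Finset.range N, xA (Set.range (G a))) :
    HasSum (fun k => (2:ℝ)^(-(ff N G k : ℤ))) x := by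
  have hx0 : 0 ≤ x := hx ▸ Finset.sum_nonneg fun a _ => xA_nonneg _
  set u : ℕ → NNReal := fun k => (2⁻¹ : NNReal) ^ ff N G k with hu
  have hcoe : ∀ k, ((u k : ENNReal)) = w (ff N G k) := by
    intro k
    rw [hu, w]
    push_cast
    rfl
  have hEN : ∑' k, (u k : ENNReal) = ENNReal.ofReal x := by
    rw [tsum_congr fun k => hcoe k, tsum_w_ff hN, hx,
      ENNReal.ofReal_sum_of_nonneg (fun i _ => xA_nonneg _)]
  have hsummable : Summable u :=
    ENNReal.tsum_coe_ne_top_iff_summable.mp (by rw [hEN]; exact ENNReal.ofReal_ne_top)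
  have hval : (∑' k, u k : NNReal) = x.toNNReal := by
    have h1 := ENNReal.coe_tsum hsummable
    rw [hEN] at h1
    exact ENNReal.coe_inj.mp (h1.trans rfl)
  have hh : HasSum (fun k => ((u k : ℝ))) x := by
    have h2 := hsummable.hasSum
    rw [hval] at h2
    have h3 := NNReal.hasSum_coe.mpr h2
    rwa [Real.coe_toNNReal x hx0] at h3
  have heq : (fun k => ((u k : ℝ))) = fun k => (2:ℝ)^(-(ff N G k : ℤ)) := by
    funext k
    rw [hu]
    push_cast
    rw [zpow_neg, zpow_natCast, inv_pow]
  exact heq ▸ hh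

/-! ### Bounding the multiplicities -/

lemma uf_ff_le (hN : 0 < N) (n : ℕ) : uf (ff N G) n ≤ (N+1)*(n+1) := by
  classical
  have hinj : Function.Injective (fun k : {k : ℕ | ff N G k = n} =>
      ((⟨min (if dead N G (↑k:ℕ).unpair.1 then N else (↑k:ℕ).unpair.1.unpair.1) N,
          Nat.lt_succ_of_le (min_le_right _ _)⟩ : Fin (N+1)),
       (⟨min (↑k:ℕ).unpair.2 n, Nat.lt_succ_of_le (min_le_right _ _)⟩ : Fin (n+1)))) := by
    rintro ⟨k, hk⟩ ⟨k', hk'⟩ hkk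
    simp only [Prod.mk.injEq, Fin.mk.injEq] at hkk
    obtain ⟨h1, h2⟩ := hkk
    simp only [Set.mem_setOf_eq] at hk hk'
    apply Subtype.ext
    show k = k'
    rw [← Nat.pair_unpair k, ← Nat.pair_unpair k']
    by_cases hd : dead N G k.unpair.1 <;> by_cases hd' : dead N G k'.unpair.1
    · -- both dead
      rw [if_pos hd] at h1
      rw [if_pos hd'] at h1
      unfold ff at hk hk'
      rw [if_pos hd] at hk
      rw [if_pos hd'] at hk'
      have hj : k.unpair.2 = k'.unpair.2 := by
        have e1 : min k.unpair.2 n = k.unpair.2 := min_eq_left (by omega)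
        have e2 : min k'.unpair.2 n = k'.unpair.2 := min_eq_left (by omega)
        omega
      have hrnk : rnk N G k.unpair.1 = rnk N G k'.unpair.1 := by omega
      have ht : k.unpair.1 = k'.unpair.1 := Nat.count_injective hd hd' hrnk
      rw [ht, hj]
    · -- mixed: contradiction
      exfalso
      have hfr' : fresh N G k'.unpair.1 := by
        unfold dead at hd'
        tauto
      rw [if_pos hd, if_neg hd'] at h1
      have ha' : k'.unpair.1.unpair.1 < N := hfr'.1
      rw [min_eq_left ha'.le] at h1
      rw [min_self] at h1
      omega
    · exfalso
      have hfr : fresh N G k.unpair.1 := by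
        unfold dead at hd
        tauto
      rw [if_neg hd, if_pos hd'] at h1
      have ha : k.unpair.1.unpair.1 < N := hfr.1
      rw [min_eq_left ha.le] at h1
      rw [min_self] at h1
      omega
    · -- both fresh
      have hfr : fresh N G k.unpair.1 := by unfold dead at hd; tauto
      have hfr' : fresh N G k'.unpair.1 := by unfold dead at hd'; tauto
      rw [if_neg hd, if_neg hd'] at h1
      rw [min_eq_left hfr.1.le, min_eq_left hfr'.1.le] at h1
      unfold ff at hk hk'
      rw [if_neg hd] at hk
      rw [if_neg hd'] at hk'
      have hj : k.unpair.2 = k'.unpair.2 := by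
        have e1 : min k.unpair.2 n = k.unpair.2 := min_eq_left (by omega)
        have e2 : min k'.unpair.2 n = k'.unpair.2 := min_eq_left (by omega)
        omega
      have hv : G k.unpair.1.unpair.1 k.unpair.1.unpair.2
          = G k'.unpair.1.unpair.1 k'.unpair.1.unpair.2 := by omega
      rw [h1] at hv
      have hb : k.unpair.1.unpair.2 = k'.unpair.1.unpair.2 :=
        rowFresh_injective (h1 ▸ hfr.2) hfr'.2 hv
      have ht : k.unpair.1 = k'.unpair.1 := by
        rw [← Nat.pair_unpair k.unpair.1, ← Nat.pair_unpair k'.unpair.1, h1, hb]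
      rw [ht, hj]
  have hcard := Nat.card_le_card_of_injective _ hinj
  simpa [uf, Nat.card_eq_fintype_card] using hcard

/-! ### The modulus of convergence -/

lemma natbound (N n m : ℕ) (hm : 2*n + (2*N+6) ≤ m) : (N+1)*(2*m+4)*2^n ≤ 2^m := by
  obtain ⟨e, rfl⟩ : ∃ e, m = 2*n+2*N+6+e := ⟨m - (2*n+2*N+6), by omega⟩
  have h1 : N+1 ≤ 2^N := Nat.lt_two_pow_self (n := N)
  have hn : n+1 ≤ 2^n := Nat.lt_two_pow_self (n := n)
  have he : e+1 ≤ 2^e := Nat.lt_two_pow_self (n := e)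
  have p1 : n+N+1 ≤ (n+1)*(N+1) := by nlinarith
  have hprod : n+N+e+1 ≤ (n+1)*(N+1)*(e+1) :=
    calc n+N+e+1 = (n+N+1) + e := by ring
      _ ≤ (n+1)*(N+1) + e * ((n+1)*(N+1)) :=
          add_le_add p1 (Nat.le_mul_of_pos_right e (by positivity))
      _ = (n+1)*(N+1)*(e+1) := by ring
  have h2 : 2*(2*n+2*N+6+e)+4 ≤ 16*((n+1)*(N+1)*(e+1)) := by nlinarith [hprod]
  have h3 : 16*((n+1)*(N+1)*(e+1)) ≤ 16*(2^n*2^N*2^e) := by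
    have : (n+1)*(N+1)*(e+1) ≤ 2^n*2^N*2^e :=
      Nat.mul_le_mul (Nat.mul_le_mul hn h1) he
    omega
  calc (N+1)*(2*(2*n+2*N+6+e)+4)*2^n
      ≤ 2^N * (16*(2^n*2^N*2^e)) * 2^n :=
        Nat.mul_le_mul (Nat.mul_le_mul h1 (le_trans h2 h3)) (le_refl _)
    _ = 2^(2*n+2*N+e+4) := by
        rw [show (16:ℕ) = 2^4 from rfl]
        ring
    _ ≤ 2^(2*n+2*N+6+e) := Nat.pow_le_pow_right (by norm_num) (by omega)

lemma realbound {N : ℕ} (n m : ℕ) (hm : 2*n + (2*N+6) ≤ m) :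
    ((N:ℝ)+1) * (2*(m:ℝ)+4) * (2⁻¹)^m ≤ (2:ℝ)^(-(n:ℤ)) := by
  have hnat := natbound N n m hm
  have hcast : ((N:ℝ)+1)*(2*(m:ℝ)+4)*(2:ℝ)^n ≤ (2:ℝ)^m := by
    exact_mod_cast hnat
  rw [zpow_neg, zpow_natCast, inv_pow]
  rw [← div_eq_mul_inv, inv_eq_one_div, div_le_div_iff₀ (by positivity) (by positivity)]
  linarith

end S3

namespace S3

variable {N : ℕ} {G : ℕ → ℕ → ℕ}

lemma conv_uf (hG : Computable₂ G) (hN : 0 < N) :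
    ConvergesComputably (fun k => (uf (ff N G) k : ℝ) * (2:ℝ)^(-(k:ℤ))) := by
  have hpow : ∀ k : ℕ, (2:ℝ)^(-(k:ℤ)) = (2⁻¹:ℝ)^k := fun k => by
    rw [zpow_neg, zpow_natCast, inv_pow]
  set a : ℕ → ℝ := fun k => (uf (ff N G) k : ℝ) * (2:ℝ)^(-(k:ℤ)) with hadef
  set b : ℕ → ℝ := fun k => (((N:ℝ)+1) * ((k:ℝ)+1)) * (2⁻¹:ℝ)^k with hbdef
  have ha0 : ∀ k, 0 ≤ a k := fun k =>
    mul_nonneg (Nat.cast_nonneg _) (le_of_lt (zpow_pos (by norm_num) _))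
  have hab : ∀ k, a k ≤ b k := by
    intro k
    simp only [hadef, hbdef]
    rw [hpow k]
    apply mul_le_mul_of_nonneg_right _ (pow_nonneg (by norm_num) _)
    have h1 := uf_ff_le (G := G) hN k
    have h2 : ((uf (ff N G) k : ℕ) : ℝ) ≤ (((N+1)*(k+1) : ℕ) : ℝ) := Nat.cast_le.mpr h1
    push_cast at h2
    linarith
  have hgs : Summable (fun k : ℕ => (2⁻¹:ℝ)^k) :=
    summable_geometric_of_lt_one (by norm_num) (by norm_num)
  have hks : Summable (fun k : ℕ => (k:ℝ) * (2⁻¹:ℝ)^k) := by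
    have h := summable_pow_mul_geometric_of_norm_lt_one (R := ℝ) 1 (r := 2⁻¹)
      (by rw [Real.norm_eq_abs, abs_of_nonneg (by norm_num : (0:ℝ) ≤ 2⁻¹)]; norm_num)
    simpa using h
  have hbs : Summable b := by
    have hb2 : b = fun k : ℕ => ((N:ℝ)+1) * ((k:ℝ) * (2⁻¹:ℝ)^k) + ((N:ℝ)+1) * ((2⁻¹:ℝ)^k) :=
      funext fun k => by simp only [hbdef]; ring
    rw [hb2]
    exact (hks.mul_left _).add (hgs.mul_left _)
  have has : Summable a := Summable.of_nonneg_of_le ha0 hab hbs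
  refine ⟨∑' k, a k, fun n => 2*n + (2*N+6), ?_, ?_⟩
  · exact (Primrec.nat_add.comp
      (Primrec.nat_mul.comp (Primrec.const 2) Primrec.id) (Primrec.const (2*N+6))).to_comp
  · intro n m hm
    have hshift : Summable fun i => a (i + m) := (summable_nat_add_iff m).mpr has
    have hshiftb : Summable fun i => b (i + m) := (summable_nat_add_iff m).mpr hbs
    have htail : ∑' k, a k - ∑ k ∈ Finset.range m, a k = ∑' i, a (i + m) := by
      have hs := Summable.sum_add_tsum_nat_add (f := a) m has
      linarith
    rw [show |∑' k, a k - ∑ k ∈ Finset.range m, a k| = ∑' i, a (i+m) from by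
      rw [htail]; exact abs_of_nonneg (tsum_nonneg fun i => ha0 _)]
    have h1 : ∑' i, a (i+m) ≤ ∑' i, b (i+m) := Summable.tsum_le_tsum (fun i => hab _) hshift hshiftb
    have h2 : ∑' i : ℕ, b (i+m) = (((N:ℝ)+1) * (2*(m:ℝ)+4)) * (2⁻¹:ℝ)^m := by
      have hb' : ∀ i:ℕ, b (i+m) =
          (((N:ℝ)+1)*(2⁻¹:ℝ)^m) * (((m:ℝ)+1) * (2⁻¹:ℝ)^i + (i:ℝ)*(2⁻¹:ℝ)^i) := by
        intro i
        simp only [hbdef]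
        push_cast
        rw [pow_add]
        ring
      rw [tsum_congr hb', tsum_mul_left,
        Summable.tsum_add (hgs.mul_left ((m:ℝ)+1)) hks, tsum_mul_left,
        tsum_geometric_of_lt_one (by norm_num) (by norm_num),
        tsum_coe_mul_geometric_of_norm_lt_one
          (by rw [Real.norm_eq_abs, abs_of_nonneg (by norm_num : (0:ℝ) ≤ 2⁻¹)]; norm_num)]
      norm_num
      ring
    have h3 := realbound (N := N) n m hm
    calc ∑' i, a (i+m) ≤ ∑' i, b (i+m) := h1
      _ = (((N:ℝ)+1) * (2*(m:ℝ)+4)) * (2⁻¹:ℝ)^m := h2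
      _ ≤ (2:ℝ)^(-(n:ℤ)) := h3

lemma key {M : ℕ} (hM : 0 < M) (g : Fin M → ℕ → ℕ) (hg : ∀ i, Computable (g i)) {x : ℝ}
    (hx : x = ∑ i, xA (Set.range (g i))) : ReorderedComputable x := by
  classical
  set G : ℕ → ℕ → ℕ := fun a b => (List.ofFn fun i => g i b).getD a 0 with hGdef
  have hlist : Computable fun q : ℕ => List.ofFn fun i => g i q := Computable.list_ofFn hg
  have hG : Computable₂ G :=
    ((Primrec.list_getD (0:ℕ)).to_comp).comp (hlist.comp Computable.snd) Computable.fst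
  have hGi : ∀ i : Fin M, G (↑i : ℕ) = g i := by
    intro i
    funext b
    show (List.ofFn fun j => g j b).getD (↑i) 0 = g i b
    have hlen : (↑i : ℕ) < (List.ofFn fun j => g j b).length := by
      simpa [List.length_ofFn] using i.isLt
    rw [List.getD_eq_getElem _ _ hlen, List.getElem_ofFn]
    try simp
  have hx' : x = ∑ a ∈ Finset.range M, xA (Set.range (G a)) := by
    rw [hx, ← Fin.sum_univ_eq_sum_range (fun a => xA (Set.range (G a))) M]
    exact Finset.sum_congr rfl fun i _ => by rw [hGi i]
  exact ⟨ff M G, computable_ff hG, hasSum_ff hM hx', conv_uf hG hM⟩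

end S3

/-- every (positive) regular real number is reordered computable. -/
theorem stmt3 (x : ℝ) (hx : 0 < x) (h : Regular x) : ReorderedComputable x := by
  classical
  obtain ⟨n, s, hSLC, hsum⟩ := h
  have hxAempty : xA (∅ : Set ℕ) = 0 := by rw [xA]; exact tsum_empty
  have hchoice : ∀ i : Fin n, s i ≠ 0 → ∃ g : ℕ → ℕ, Computable g ∧ xA (Set.range g) = s i := by
    intro i hi
    obtain ⟨A, hCE, hxAi⟩ := hSLC i
    rcases hCE with rfl | ⟨f, hf, rfl⟩
    · exact absurd (hxAempty ▸ hxAi).symm hi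
    · exact ⟨f, hf, hxAi⟩
  choose g0 hg0c hg0x using hchoice
  set T : Finset (Fin n) := Finset.univ.filter (fun i => s i ≠ 0) with hT
  have hmemT : ∀ i : Fin n, i ∈ T → s i ≠ 0 := by
    intro i hi
    rw [hT, Finset.mem_filter] at hi
    exact hi.2
  have hxT : x = ∑ i ∈ T, s i := by
    rw [← hsum, hT]
    exact (Finset.sum_filter_ne_zero _).symm
  set M := T.card with hM
  have hMpos : 0 < M := by
    rcases Nat.eq_zero_or_pos M with h0 | h0
    · exfalso
      rw [hM] at h0
      rw [Finset.card_eq_zero.mp h0, Finset.sum_empty] at hxT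
      exact hx.ne' hxT
    · exact h0
  set E : Fin M ≃ {i // i ∈ T} := T.equivFin.symm with hE
  set g : Fin M → ℕ → ℕ := fun j => g0 (E j).1 (hmemT _ (E j).2) with hg
  have hgc : ∀ j, Computable (g j) := fun j => hg0c _ _
  have hgx : ∀ j, xA (Set.range (g j)) = s (E j).1 := fun j => hg0x _ _
  have hxfin : x = ∑ j, xA (Set.range (g j)) := by
    rw [hxT, ← Finset.sum_coe_sort T s, ← E.sum_comp (fun i : {i // i ∈ T} => s i.1)]
    exact Finset.sum_congr rfl fun j _ => (hgx j).symm
  exact S3.key hMpos g hgc hxfin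
end

section
/- Let f : ℕ → ℕ be a function (not necessarily computable) with limsup_{n→∞} (f(n))^{1/n} < 2. Then the series ∑_{k=0}^∞ f(k)·2^{−k} converges computably. -/
open Filter

/-- if `limsup (f n)^{1/n} < 2` then `∑ f(k)·2^{-k}` converges computably. -/
theorem stmt4 (f : ℕ → ℕ) (h : rootLimsup f < 2) :
    ConvergesComputably (fun k => (f k : ℝ) * (2:ℝ)^(-(k:ℤ))) := by
  obtain ⟨r, hr1, hr2⟩ := exists_between h
  have hrtop : r ≠ ⊤ := (hr2.trans_le le_top).ne
  have hev : ∀ᶠ n in atTop, (f n : ENNReal) ^ (1/(n:ℝ)) < r :=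
    Filter.eventually_lt_of_limsup_lt hr1
  obtain ⟨N0, hN0⟩ := Filter.eventually_atTop.mp hev
  set N := N0 + 1 with hN
  set ρ2 : ℝ := r.toReal with hρ2
  have hρ2nn : 0 ≤ ρ2 := ENNReal.toReal_nonneg
  have hρ2lt : ρ2 < 2 := by
    have := (ENNReal.toReal_lt_toReal hrtop (by norm_num)).mpr hr2
    simpa using this
  -- f n ≤ ρ2 ^ n for n ≥ N
  have hfle : ∀ n, N ≤ n → (f n : ℝ) ≤ ρ2 ^ n := by
    intro n hn
    have hnne : (n:ℝ) ≠ 0 := Nat.cast_ne_zero.mpr (by omega)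
    have h1 : (f n : ENNReal) ^ (1/(n:ℝ)) ≤ r := (hN0 n (by omega)).le
    have h2 : ((f n : ENNReal) ^ (1/(n:ℝ))) ^ (n:ℝ) ≤ r ^ (n:ℝ) :=
      ENNReal.rpow_le_rpow h1 (by positivity)
    have h3 : ((f n : ENNReal) ^ (1/(n:ℝ))) ^ (n:ℝ) = (f n : ENNReal) := by
      rw [← ENNReal.rpow_mul, one_div, inv_mul_cancel₀ hnne, ENNReal.rpow_one]
    rw [h3] at h2
    have h4 : ((f n : ENNReal)).toReal ≤ (r ^ (n:ℝ)).toReal :=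
      ENNReal.toReal_mono (by simp [ENNReal.rpow_eq_top_iff, hrtop]) h2
    calc (f n : ℝ) = ((f n : ENNReal)).toReal := by simp
    _ ≤ (r ^ (n:ℝ)).toReal := h4
    _ = ρ2 ^ n := by rw [← ENNReal.toReal_rpow]; rw [Real.rpow_natCast]
  -- set up geometric bound
  set ρ : ℝ := max (ρ2/2) (1/2) with hρ
  have hρ0 : (0:ℝ) < ρ := lt_of_lt_of_le one_half_pos (le_max_right _ _)
  have hρ1 : ρ < 1 := max_lt (by linarith) (by norm_num)
  have hρhalf : (1:ℝ)/2 ≤ ρ := le_max_right _ _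
  set a : ℕ → ℝ := fun k => (f k : ℝ) * (2:ℝ)^(-(k:ℤ)) with ha
  have hann : ∀ k, 0 ≤ a k := by
    intro k
    apply mul_nonneg (Nat.cast_nonneg _)
    positivity
  have htwo : ∀ k : ℕ, (2:ℝ)^(-(k:ℤ)) = ((2:ℝ)^k)⁻¹ := by
    intro k; rw [zpow_neg, zpow_natCast]
  have hkey : ∀ k, N ≤ k → a k ≤ ρ ^ k := by
    intro k hk
    have h1 : (f k : ℝ) ≤ (2*ρ) ^ k := by
      refine (hfle k hk).trans (pow_le_pow_left₀ hρ2nn ?_ k)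
      have := le_max_left (ρ2/2) (1/2); linarith [le_max_left (ρ2/2) ((1:ℝ)/2)]
    have h2pos : (0:ℝ) < (2:ℝ)^k := by positivity
    calc a k ≤ (2*ρ)^k * (2:ℝ)^(-(k:ℤ)) := by
          apply mul_le_mul_of_nonneg_right h1 (by positivity)
    _ = ρ ^ k := by
          rw [htwo, mul_pow]
          field_simp
  have hsum : Summable a := by
    rw [← summable_nat_add_iff N]
    apply Summable.of_nonneg_of_le (fun k => hann _) (fun k => ?_)
      (((summable_geometric_of_lt_one hρ0.le hρ1).mul_right (ρ^N)))
    calc a (k + N) ≤ ρ ^ (k + N) := hkey _ (by omega)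
    _ = ρ ^ k * ρ ^ N := by rw [pow_add]
  set x : ℝ := ∑' k, a k with hx
  -- tail bound
  have htail : ∀ m, N ≤ m → x - ∑ k ∈ Finset.range m, a k ≤ (1-ρ)⁻¹ * ρ ^ m := by
    intro m hm
    have heq := Summable.sum_add_tsum_nat_add (f := a) m hsum
    have hshift : Summable (fun k => a (k + m)) := (summable_nat_add_iff m).mpr hsum
    have hle : ∑' k, a (k + m) ≤ ∑' k : ℕ, ρ ^ k * ρ ^ m := by
      apply Summable.tsum_le_tsum _ hshift ((summable_geometric_of_lt_one hρ0.le hρ1).mul_right _)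
      intro k
      calc a (k + m) ≤ ρ ^ (k+m) := hkey _ (by omega)
      _ = ρ ^ k * ρ ^ m := pow_add ρ k m
    have hgeo : ∑' k : ℕ, ρ ^ k * ρ ^ m = (1-ρ)⁻¹ * ρ ^ m := by
      rw [tsum_mul_right, tsum_geometric_of_lt_one hρ0.le hρ1]
    linarith [heq, hle, hgeo ▸ hle]
  -- choose constants
  obtain ⟨ca, hca⟩ := exists_pow_lt_of_lt_one (by linarith : (0:ℝ) < 1 - ρ) hρ1
  obtain ⟨cb, hcb⟩ := exists_pow_lt_of_lt_one one_half_pos hρ1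
  refine ⟨x, fun n => N + ca + cb * n, ?_, ?_⟩
  · exact (Primrec.nat_add.comp (Primrec.const (N + ca))
      (Primrec.nat_mul.comp (Primrec.const cb) Primrec.id)).to_comp
  · intro n m hm
    have hm : N + ca + cb * n ≤ m := hm
    have hNm : N ≤ m := by omega
    have hnonneg : ∑ k ∈ Finset.range m, a k ≤ x :=
      Summable.sum_le_tsum _ (fun k _ => hann k) hsum
    rw [abs_of_nonneg (by linarith)]
    have h1 : x - ∑ k ∈ Finset.range m, a k ≤ (1-ρ)⁻¹ * ρ ^ m := htail m hNm
    have h2 : ρ ^ m ≤ ρ ^ (N + ca + cb * n) :=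
      pow_le_pow_of_le_one hρ0.le hρ1.le hm
    have h3 : ρ ^ (N + ca + cb * n) = ρ ^ N * ρ ^ ca * (ρ ^ cb) ^ n := by
      rw [pow_add, pow_add, pow_mul]
    have h4 : ρ ^ N ≤ 1 := pow_le_one₀ hρ0.le hρ1.le
    have h5 : (ρ ^ cb) ^ n ≤ ((1:ℝ)/2) ^ n :=
      pow_le_pow_left₀ (by positivity) hcb.le n
    have h6 : ρ ^ (N + ca + cb * n) ≤ (1 - ρ) * ((1:ℝ)/2) ^ n := by
      rw [h3]
      have : ρ ^ N * ρ ^ ca ≤ 1 - ρ := by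
        nlinarith [pow_nonneg hρ0.le ca, pow_nonneg hρ0.le N]
      have hp : (0:ℝ) ≤ (ρ ^ cb) ^ n := by positivity
      nlinarith [h5]
    have h7 : (2:ℝ)^(-(n:ℤ)) = ((1:ℝ)/2) ^ n := by
      rw [zpow_neg, zpow_natCast, one_div, inv_pow]
    rw [h7]
    have h1ρ : (0:ℝ) < 1 - ρ := by linarith
    calc x - ∑ k ∈ Finset.range m, a k ≤ (1-ρ)⁻¹ * ρ ^ m := h1
    _ ≤ (1-ρ)⁻¹ * ((1-ρ) * ((1:ℝ)/2)^n) := by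
        apply mul_le_mul_of_nonneg_left (le_trans h2 h6) (by positivity)
    _ = ((1:ℝ)/2)^n := by field_simp
end

section
/- Let f : ℕ → ℕ be a function such that the series ∑_{k=0}^∞ f(k)·2^{−k} converges, let c ∈ ℕ, and define g : ℕ → ℕ by g(n) := ∑_{k=0}^{n+c} f(k). Then for all n ∈ ℕ, ∑_{k=n}^∞ g(k)·2^{−k} = 2^{−n+1}·∑_{k=0}^{n+c−1} f(k) + 2^{c+1}·∑_{k=n+c}^∞ f(k)·2^{−k}; in particular the series ∑_{k=0}^∞ g(k)·2^{−k} converges. Moreover, if ∑_{k=0}^∞ f(k)·2^{−k} converges computably, then ∑_{k=0}^∞ g(k)·2^{−k} converges computably as well. -/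
open Filter

lemma two_zpow_neg_eq (k : ℕ) : (2:ℝ)^(-(k:ℤ)) = (2⁻¹:ℝ)^k := by
  rw [zpow_neg, zpow_natCast, inv_pow]

lemma half_tsum : ∑' k : ℕ, (2⁻¹:ℝ)^k = 2 := by
  rw [tsum_geometric_of_lt_one (by norm_num) (by norm_num)]; norm_num

lemma half_summable : Summable (fun k : ℕ => (2⁻¹:ℝ)^k) :=
  summable_geometric_of_lt_one (by norm_num) (by norm_num)

lemma two_pow_half_pow (j : ℕ) : (2:ℝ)^j * (2⁻¹:ℝ)^j = 1 := by
  rw [← mul_pow]; norm_num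

-- swap lemma
lemma swap_lemma (a : ℕ → ℝ) (ha : ∀ i, 0 ≤ a i)
    (h : Summable fun i => a i * (2⁻¹:ℝ)^i) :
    Summable (fun k => (∑ i ∈ Finset.range (k+1), a i) * (2⁻¹:ℝ)^k) ∧
    ∑' k, (∑ i ∈ Finset.range (k+1), a i) * (2⁻¹:ℝ)^k = 2 * ∑' i, a i * (2⁻¹:ℝ)^i := by
  set F : ℕ × ℕ → ℝ := fun p => if p.1 ≤ p.2 then a p.1 * (2⁻¹:ℝ)^p.2 else 0 with hFdef
  have hF0 : ∀ p, 0 ≤ F p := by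
    intro p; by_cases hp : p.1 ≤ p.2
    · simp only [hFdef, hp, if_true]
      exact mul_nonneg (ha _) (by positivity)
    · simp [hFdef, hp]
  have hfib : ∀ i, Summable fun k => F (i, k) := by
    intro i
    apply Summable.of_nonneg_of_le (fun k => hF0 _) (fun k => ?_) ((half_summable.mul_left (a i)))
    by_cases hik : i ≤ k
    · simp [hFdef, hik]
    · simp only [hFdef, hik, if_false]
      exact mul_nonneg (ha i) (by positivity)
  have hfib_tsum : ∀ i, ∑' k, F (i, k) = a i * (2⁻¹:ℝ)^i * 2 := by
    intro i
    have hh := Summable.sum_add_tsum_nat_add (f := fun k => F (i,k)) i (hfib i)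
    have hz : ∑ k ∈ Finset.range i, F (i,k) = 0 := by
      apply Finset.sum_eq_zero; intro k hk
      simp only [Finset.mem_range] at hk
      simp [hFdef, Nat.not_le.2 hk]
    rw [hz, zero_add] at hh
    rw [← hh]
    have he : ∀ k, F (i, k + i) = (a i * (2⁻¹:ℝ)^i) * (2⁻¹:ℝ)^k := by
      intro k; simp only [hFdef, Nat.le_add_left, if_true]
      rw [pow_add]; ring
    rw [tsum_congr he, tsum_mul_left, half_tsum]
  have hsums : Summable fun i => ∑' k, F (i, k) := by
    simp_rw [hfib_tsum]; exact h.mul_right 2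
  have hF : Summable F := (summable_prod_of_nonneg hF0).2 ⟨hfib, hsums⟩
  set G : ℕ × ℕ → ℝ := fun p => F (p.2, p.1) with hGdef
  have hGF : Summable G := hF.prod_symm
  have hfib2 : ∀ k, Summable fun i => F (i, k) := fun k =>
    summable_of_finite_support (Set.Finite.subset (Set.finite_Icc 0 k) (by
      intro i hi
      simp only [Function.mem_support, hFdef] at hi
      by_contra hik
      simp only [Set.mem_Icc, not_and, Nat.zero_le, true_implies, not_le] at hik
      exact hi (by simp [Nat.not_le.2 hik])))
  have hfib2_tsum : ∀ k, (∑' i, F (i, k)) = (∑ i ∈ Finset.range (k+1), a i) * (2⁻¹:ℝ)^k := by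
    intro k
    rw [tsum_eq_sum (s := Finset.range (k+1)) (by
      intro i hi
      simp only [Finset.mem_range, not_lt] at hi
      simp [hFdef, Nat.not_le.2 hi])]
    rw [Finset.sum_mul]
    apply Finset.sum_congr rfl
    intro i hi
    simp only [Finset.mem_range, Nat.lt_succ_iff] at hi
    simp [hFdef, hi]
  constructor
  · have := ((summable_prod_of_nonneg (f := G) (fun p => hF0 _)).1 hGF).2
    simpa only [hGdef, hfib2_tsum] using this
  · calc ∑' k, (∑ i ∈ Finset.range (k+1), a i) * (2⁻¹:ℝ)^k
        = ∑' k, ∑' i, F (i, k) := by simp_rw [hfib2_tsum]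
      _ = ∑' p, G p := (hGF.tsum_prod' (fun k => hfib2 k)).symm
      _ = ∑' p, F p := (Equiv.prodComm ℕ ℕ).tsum_eq F
      _ = ∑' i, ∑' k, F (i, k) := hF.tsum_prod' hfib
      _ = 2 * ∑' i, a i * (2⁻¹:ℝ)^i := by
          simp_rw [hfib_tsum]; rw [tsum_mul_right]; ring

lemma shift_summable {f : ℕ → ℕ} (hf : Summable fun k => (f k : ℝ) * (2⁻¹:ℝ)^k) (d : ℕ) :
    Summable fun i => (f (d + i) : ℝ) * (2⁻¹:ℝ)^i := by
  have h1 : Summable fun i => (f (i + d) : ℝ) * (2⁻¹:ℝ)^(i + d) :=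
    (summable_nat_add_iff d).2 hf
  have h2 : Summable fun i => ((f (d + i) : ℝ) * (2⁻¹:ℝ)^i) * (2⁻¹:ℝ)^d := by
    apply h1.congr
    intro i
    rw [pow_add, add_comm i d]; ring
  exact (summable_mul_right_iff (by positivity : ((2⁻¹:ℝ)^d) ≠ 0)).1 h2

theorem stmt6' (f : ℕ → ℕ) (hf : Summable (fun k => (f k : ℝ) * (2⁻¹:ℝ)^k))
    (c : ℕ) (g : ℕ → ℕ) (hg : ∀ n : ℕ, g n = ∑ k ∈ Finset.range (n + c + 1), f k) :
    (∀ n : ℕ,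
      (∑' k : ℕ, (g (n + k) : ℝ) * (2⁻¹:ℝ)^(n + k)) =
        (2 * (2⁻¹:ℝ)^n) * (∑ k ∈ Finset.range (n + c), (f k : ℝ)) +
        ((2:ℝ)^c * 2) * ∑' k : ℕ, (f (n + c + k) : ℝ) * (2⁻¹:ℝ)^(n + c + k)) ∧
    Summable (fun k => (g k : ℝ) * (2⁻¹:ℝ)^k) := by
  constructor
  · intro n
    set A : ℝ := ∑ k ∈ Finset.range (n + c), (f k : ℝ) with hA
    set a : ℕ → ℝ := fun i => (f (n + c + i) : ℝ) with ha
    have ha0 : ∀ i, 0 ≤ a i := fun i => Nat.cast_nonneg _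
    have hsa : Summable fun i => a i * (2⁻¹:ℝ)^i := shift_summable hf (n + c)
    obtain ⟨hS, hT⟩ := swap_lemma a ha0 hsa
    set T : ℝ := ∑' i, a i * (2⁻¹:ℝ)^i with hTdef
    have hgnk : ∀ k, (g (n + k) : ℝ) = A + ∑ i ∈ Finset.range (k+1), a i := by
      intro k
      rw [hg (n + k)]
      have : n + k + c + 1 = (n + c) + (k + 1) := by omega
      rw [this, Finset.sum_range_add]
      push_cast
      rfl
    have hterm : ∀ k, (g (n + k) : ℝ) * (2⁻¹:ℝ)^(n + k)
        = ((2⁻¹:ℝ)^n * A) * (2⁻¹:ℝ)^k + (2⁻¹:ℝ)^n * ((∑ i ∈ Finset.range (k+1), a i) * (2⁻¹:ℝ)^k) := by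
      intro k
      rw [hgnk k, pow_add]; ring
    have hs1 : Summable fun k => ((2⁻¹:ℝ)^n * A) * (2⁻¹:ℝ)^k := half_summable.mul_left _
    have hs2 : Summable fun k => (2⁻¹:ℝ)^n * ((∑ i ∈ Finset.range (k+1), a i) * (2⁻¹:ℝ)^k) :=
      hS.mul_left _
    have htail : ∑' k : ℕ, (f (n + c + k) : ℝ) * (2⁻¹:ℝ)^(n + c + k)
        = T * (2⁻¹:ℝ)^(n + c) := by
      rw [hTdef, ← tsum_mul_right]
      apply tsum_congr; intro k
      simp only [ha, pow_add]; ring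
    rw [tsum_congr hterm, hs1.tsum_add hs2, tsum_mul_left, tsum_mul_left,
      half_tsum, hT, htail]
    have hcan : (2:ℝ)^c * (2⁻¹:ℝ)^c = 1 := two_pow_half_pow c
    rw [pow_add]
    linear_combination (-2 * (2⁻¹:ℝ)^n * T) * hcan
  · set A0 : ℝ := ∑ k ∈ Finset.range c, (f k : ℝ) with hA0
    set a : ℕ → ℝ := fun i => (f (c + i) : ℝ) with ha
    have ha0 : ∀ i, 0 ≤ a i := fun i => Nat.cast_nonneg _
    have hsa : Summable fun i => a i * (2⁻¹:ℝ)^i := shift_summable hf c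
    obtain ⟨hS, -⟩ := swap_lemma a ha0 hsa
    have hgk : ∀ k, (g k : ℝ) = A0 + ∑ i ∈ Finset.range (k+1), a i := by
      intro k
      rw [hg k]
      have : k + c + 1 = c + (k + 1) := by omega
      rw [this, Finset.sum_range_add]
      push_cast
      rfl
    apply Summable.congr (f := fun k => A0 * (2⁻¹:ℝ)^k + (∑ i ∈ Finset.range (k+1), a i) * (2⁻¹:ℝ)^k)
    · exact (half_summable.mul_left A0).add hS
    · intro k
      rw [hgk k]; ring

lemma stmt6_part3 (f : ℕ → ℕ) (hf : Summable (fun k => (f k : ℝ) * (2⁻¹:ℝ)^k))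
    (c : ℕ) (g : ℕ → ℕ) (hg : ∀ n : ℕ, g n = ∑ k ∈ Finset.range (n + c + 1), f k)
    (H : ConvergesComputably (fun k => (f k : ℝ) * (2:ℝ)^(-(k:ℤ)))) :
    ConvergesComputably (fun k => (g k : ℝ) * (2:ℝ)^(-(k:ℤ))) := by
  obtain ⟨x, s, hsc, hs⟩ := H
  simp_rw [two_zpow_neg_eq] at hs
  obtain ⟨part1, part2⟩ := stmt6' f hf c g hg
  set F : ℕ → ℝ := fun k => (f k : ℝ) * (2⁻¹:ℝ)^k with hFdef
  set G : ℕ → ℝ := fun k => (g k : ℝ) * (2⁻¹:ℝ)^k with hGdef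
  have hF0 : ∀ k, 0 ≤ F k := fun k => mul_nonneg (Nat.cast_nonneg _) (by positivity)
  have hG0 : ∀ k, 0 ≤ G k := fun k => mul_nonneg (Nat.cast_nonneg _) (by positivity)
  -- x is the sum of the f-series
  have htendF : Tendsto (fun m => ∑ k ∈ Finset.range m, F k) atTop (nhds (∑' k, F k)) :=
    hf.hasSum.tendsto_sum_nat
  have habs : Tendsto (fun m => |x - ∑ k ∈ Finset.range m, F k|) atTop
      (nhds (|x - ∑' k, F k|)) := (tendsto_const_nhds.sub htendF).abs
  have hxn : ∀ n : ℕ, |x - ∑' k, F k| ≤ (2⁻¹:ℝ)^n := fun n =>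
    le_of_tendsto habs (eventually_atTop.2 ⟨s n, fun m hm => hs n m hm⟩)
  have hx : x = ∑' k, F k := by
    have h0 : Tendsto (fun n : ℕ => (2⁻¹:ℝ)^n) atTop (nhds 0) :=
      tendsto_pow_atTop_nhds_zero_of_lt_one (by norm_num) (by norm_num)
    have := ge_of_tendsto h0 (Eventually.of_forall hxn)
    have h1 := abs_nonneg (x - ∑' k, F k)
    have : |x - ∑' k, F k| = 0 := le_antisymm this h1
    have := abs_eq_zero.1 this
    linarith
  have hxnn : 0 ≤ x := hx ▸ tsum_nonneg hF0
  -- tail bound for f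
  have htail : ∀ n m : ℕ, s n ≤ m → ∑' k, F (m + k) ≤ (2⁻¹:ℝ)^n := by
    intro n m hm
    have hsum := Summable.sum_add_tsum_nat_add (f := F) m hf
    have hcg : ∑' k, F (m + k) = ∑' k, F (k + m) :=
      tsum_congr fun k => by rw [add_comm]
    have hb := hs n m hm
    rw [hx] at hb
    have : ∑' k, F (k + m) = (∑' k, F k) - ∑ k ∈ Finset.range m, F k := by linarith
    rw [hcg, this]
    have := abs_le.1 hb
    linarith [this.2, abs_le.1 hb]
  -- choose X with x ≤ 2^X
  obtain ⟨X, hX⟩ : ∃ X : ℕ, x ≤ (2:ℝ)^X := by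
    obtain ⟨N, hN⟩ := exists_nat_gt x
    refine ⟨N, hN.le.trans ?_⟩
    exact_mod_cast Nat.cast_le.2 (Nat.lt_two_pow_self (n := N)).le
  -- the modulus
  set t : ℕ → ℕ := fun n => s (n + c + 3) + (n + 3 + X) with htdef
  have htc : Computable t := by
    have hp1 : Primrec (fun n : ℕ => n + c + 3) :=
      Primrec.nat_add.comp (Primrec.nat_add.comp Primrec.id (Primrec.const c)) (Primrec.const 3)
    have hp2 : Primrec (fun n : ℕ => n + 3 + X) :=
      Primrec.nat_add.comp (Primrec.nat_add.comp Primrec.id (Primrec.const 3)) (Primrec.const X)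
    exact Primrec.nat_add.to_comp.comp (hsc.comp hp1.to_comp) hp2.to_comp
  refine ⟨∑' k, G k, t, htc, ?_⟩
  intro n m hm
  simp_rw [two_zpow_neg_eq]
  set p : ℕ := s (n + c + 3) with hpdef
  have hpm : p ≤ m := le_trans (Nat.le_add_right _ _) hm
  have hmc : p ≤ m + c := hpm.trans (Nat.le_add_right _ _)
  -- decompose the sum
  have hsplit := Summable.sum_add_tsum_nat_add (f := G) m part2
  have hcgG : ∑' k, G (k + m) = ∑' k, G (m + k) := tsum_congr fun k => by rw [add_comm]
  have htg0 : 0 ≤ ∑' k, G (m + k) := tsum_nonneg fun k => hG0 _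
  have hdiff : ∑' k, G k - ∑ k ∈ Finset.range m, G k = ∑' k, G (m + k) := by
    rw [← hcgG]; linarith
  have habsval : |∑' k, G k - ∑ k ∈ Finset.range m, G k| = ∑' k, G (m + k) := by
    rw [hdiff, abs_of_nonneg htg0]
  rw [habsval]
  -- the tail formula
  have hform := part1 m
  -- bound the second tail
  have hT2 : ∑' k : ℕ, (f (m + c + k) : ℝ) * (2⁻¹:ℝ)^(m + c + k) ≤ (2⁻¹:ℝ)^(n + c + 3) :=
    htail (n + c + 3) (m + c) hmc
  have hT2nn : 0 ≤ ∑' k : ℕ, (f (m + c + k) : ℝ) * (2⁻¹:ℝ)^(m + c + k) :=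
    tsum_nonneg fun k => mul_nonneg (Nat.cast_nonneg _) (by positivity)
  -- bound A_m
  have hApart : ∑ k ∈ Finset.range (m + c), (f k : ℝ)
      ≤ (2:ℝ)^p * x + (2:ℝ)^(m+c) * (2⁻¹:ℝ)^(n + c + 3) := by
    have hsum_eq : ∑ k ∈ Finset.range (m + c), (f k : ℝ)
        = ∑ k ∈ Finset.range p, (f k : ℝ) + ∑ i ∈ Finset.range (m + c - p), (f (p + i) : ℝ) := by
      rw [← Finset.sum_range_add]
      rw [Nat.add_sub_cancel' hmc]
    rw [hsum_eq]
    have hb1 : ∑ k ∈ Finset.range p, (f k : ℝ) ≤ (2:ℝ)^p * x := by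
      calc ∑ k ∈ Finset.range p, (f k : ℝ)
          ≤ ∑ k ∈ Finset.range p, (2:ℝ)^p * F k := by
            apply Finset.sum_le_sum
            intro k hk
            simp only [Finset.mem_range] at hk
            have h1 : (f k : ℝ) = (2:ℝ)^k * F k := by
              simp only [hFdef]
              rw [← mul_assoc, mul_comm ((2:ℝ)^k) ((f k:ℝ)), mul_assoc, two_pow_half_pow, mul_one]
            rw [h1]
            apply mul_le_mul_of_nonneg_right _ (hF0 k)
            exact pow_le_pow_right₀ (by norm_num) hk.le
        _ = (2:ℝ)^p * ∑ k ∈ Finset.range p, F k := by rw [Finset.mul_sum]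
        _ ≤ (2:ℝ)^p * x := by
            apply mul_le_mul_of_nonneg_left _ (by positivity)
            rw [hx]
            exact hf.sum_le_tsum _ (fun k _ => hF0 k)
    have hb2 : ∑ i ∈ Finset.range (m + c - p), (f (p + i) : ℝ)
        ≤ (2:ℝ)^(m+c) * (2⁻¹:ℝ)^(n + c + 3) := by
      have hshift : Summable fun i => F (p + i) :=
        ((summable_nat_add_iff p).2 hf).congr (fun i => by rw [add_comm])
      calc ∑ i ∈ Finset.range (m + c - p), (f (p + i) : ℝ)
          ≤ ∑ i ∈ Finset.range (m + c - p), (2:ℝ)^(m+c) * F (p + i) := by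
            apply Finset.sum_le_sum
            intro i hi
            simp only [Finset.mem_range] at hi
            have h1 : (f (p + i) : ℝ) = (2:ℝ)^(p+i) * F (p + i) := by
              simp only [hFdef]
              rw [← mul_assoc, mul_comm ((2:ℝ)^(p+i)) ((f (p+i):ℝ)), mul_assoc,
                two_pow_half_pow, mul_one]
            rw [h1]
            apply mul_le_mul_of_nonneg_right _ (hF0 _)
            exact pow_le_pow_right₀ (by norm_num) (by omega)
        _ = (2:ℝ)^(m+c) * ∑ i ∈ Finset.range (m + c - p), F (p + i) := by rw [Finset.mul_sum]
        _ ≤ (2:ℝ)^(m+c) * (2⁻¹:ℝ)^(n + c + 3) := by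
            apply mul_le_mul_of_nonneg_left _ (by positivity)
            calc ∑ i ∈ Finset.range (m + c - p), F (p + i)
                ≤ ∑' i, F (p + i) := hshift.sum_le_tsum _ (fun k _ => hF0 _)
              _ ≤ (2⁻¹:ℝ)^(n + c + 3) := htail (n + c + 3) p le_rfl
    linarith
  -- put everything together
  rw [hform]
  have hAnn : 0 ≤ ∑ k ∈ Finset.range (m + c), (f k : ℝ) :=
    Finset.sum_nonneg fun k _ => Nat.cast_nonneg _
  have hm' : p + (n + 3 + X) ≤ m := hm
  have hrm : (2⁻¹:ℝ)^m ≤ (2⁻¹:ℝ)^(p + X + (n + 3)) := by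
    apply pow_le_pow_of_le_one (by norm_num) (by norm_num)
    omega
  have key1 : 2 * (2⁻¹:ℝ)^m * ((2:ℝ)^p * x) ≤ 2 * (2⁻¹:ℝ)^(n+3) := by
    have h1 : 2 * (2⁻¹:ℝ)^m * ((2:ℝ)^p * x) ≤ 2 * (2⁻¹:ℝ)^(p + X + (n+3)) * ((2:ℝ)^p * (2:ℝ)^X) := by
      apply mul_le_mul (by nlinarith [pow_nonneg (by norm_num : (0:ℝ) ≤ 2⁻¹) m]) ?_ (by positivity) (by positivity)
      exact mul_le_mul_of_nonneg_left hX (by positivity)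
    calc 2 * (2⁻¹:ℝ)^m * ((2:ℝ)^p * x)
        ≤ 2 * (2⁻¹:ℝ)^(p + X + (n+3)) * ((2:ℝ)^p * (2:ℝ)^X) := h1
      _ = 2 * (2⁻¹:ℝ)^(n+3) * (((2:ℝ)^p * (2⁻¹:ℝ)^p) * ((2:ℝ)^X * (2⁻¹:ℝ)^X)) := by
          rw [pow_add, pow_add]; ring
      _ = 2 * (2⁻¹:ℝ)^(n+3) := by rw [two_pow_half_pow, two_pow_half_pow]; ring
  have key2 : 2 * (2⁻¹:ℝ)^m * ((2:ℝ)^(m+c) * (2⁻¹:ℝ)^(n + c + 3)) = (2:ℝ)^c * 2 * (2⁻¹:ℝ)^(n+c+3) := by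
    rw [pow_add]
    linear_combination (2 * (2:ℝ)^c * (2⁻¹:ℝ)^(n+c+3)) * (two_pow_half_pow m)
  have key3 : (2:ℝ)^c * 2 * (2⁻¹:ℝ)^(n + c + 3) = 2 * (2⁻¹:ℝ)^(n+3) := by
    have hnc : (n + c + 3) = c + (n + 3) := by omega
    rw [hnc, pow_add]
    linear_combination (2 * (2⁻¹:ℝ)^(n+3)) * (two_pow_half_pow c)
  have hfin : 2 * (2⁻¹:ℝ)^m * ∑ k ∈ Finset.range (m + c), (f k : ℝ)
      + ((2:ℝ)^c * 2) * ∑' k : ℕ, (f (m + c + k) : ℝ) * (2⁻¹:ℝ)^(m + c + k)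
      ≤ 6 * (2⁻¹:ℝ)^(n+3) := by
    have e1 : 2 * (2⁻¹:ℝ)^m * ∑ k ∈ Finset.range (m + c), (f k : ℝ)
        ≤ 2 * (2⁻¹:ℝ)^m * ((2:ℝ)^p * x + (2:ℝ)^(m+c) * (2⁻¹:ℝ)^(n + c + 3)) := by
      apply mul_le_mul_of_nonneg_left hApart (by positivity)
    have e2 : ((2:ℝ)^c * 2) * ∑' k : ℕ, (f (m + c + k) : ℝ) * (2⁻¹:ℝ)^(m + c + k)
        ≤ ((2:ℝ)^c * 2) * (2⁻¹:ℝ)^(n + c + 3) :=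
      mul_le_mul_of_nonneg_left hT2 (by positivity)
    have e0 : 2 * (2⁻¹:ℝ)^m * ((2:ℝ)^p * x + (2:ℝ)^(m+c) * (2⁻¹:ℝ)^(n + c + 3))
        = 2 * (2⁻¹:ℝ)^m * ((2:ℝ)^p * x) + 2 * (2⁻¹:ℝ)^m * ((2:ℝ)^(m+c) * (2⁻¹:ℝ)^(n + c + 3)) := by
      ring
    linarith [key1, key2, key3, e1, e2, e0]
  calc 2 * (2⁻¹:ℝ)^m * ∑ k ∈ Finset.range (m + c), (f k : ℝ)
      + ((2:ℝ)^c * 2) * ∑' k : ℕ, (f (m + c + k) : ℝ) * (2⁻¹:ℝ)^(m + c + k)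
      ≤ 6 * (2⁻¹:ℝ)^(n+3) := hfin
    _ ≤ (2⁻¹:ℝ)^n := by
        rw [pow_add]
        nlinarith [pow_nonneg (by norm_num : (0:ℝ) ≤ 2⁻¹) n]

/-- tail formula for `∑ g(k)·2^{-k}` where `g n = ∑_{k ≤ n+c} f k`,
convergence of that series, and preservation of computable convergence. -/
theorem stmt6 (f : ℕ → ℕ) (hf : Summable (fun k => (f k : ℝ) * (2:ℝ)^(-(k:ℤ))))
    (c : ℕ) (g : ℕ → ℕ) (hg : ∀ n : ℕ, g n = ∑ k ∈ Finset.range (n + c + 1), f k) :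
    (∀ n : ℕ,
      (∑' k : ℕ, (g (n + k) : ℝ) * (2:ℝ)^(-((n + k : ℕ) : ℤ))) =
        (2:ℝ)^(-(n:ℤ) + 1) * (∑ k ∈ Finset.range (n + c), (f k : ℝ)) +
        (2:ℝ)^((c:ℤ) + 1) * ∑' k : ℕ, (f (n + c + k) : ℝ) * (2:ℝ)^(-((n + c + k : ℕ) : ℤ))) ∧
    Summable (fun k => (g k : ℝ) * (2:ℝ)^(-(k:ℤ))) ∧
    (ConvergesComputably (fun k => (f k : ℝ) * (2:ℝ)^(-(k:ℤ))) →
      ConvergesComputably (fun k => (g k : ℝ) * (2:ℝ)^(-(k:ℤ)))) := by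
  simp_rw [two_zpow_neg_eq] at hf
  obtain ⟨p1, p2⟩ := stmt6' f hf c g hg
  refine ⟨?_, ?_, stmt6_part3 f hf c g hg⟩
  · intro n
    have e1 : (2:ℝ)^(-(n:ℤ)+1) = 2 * (2⁻¹:ℝ)^n := by
      rw [zpow_add₀ (by norm_num : (2:ℝ) ≠ 0), zpow_neg, zpow_natCast, zpow_one, inv_pow]
      ring
    have e2 : (2:ℝ)^((c:ℤ)+1) = (2:ℝ)^c * 2 := by
      rw [zpow_add₀ (by norm_num : (2:ℝ) ≠ 0), zpow_natCast, zpow_one]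
    simp_rw [two_zpow_neg_eq, e1, e2]
    exact p1 n
  · simp_rw [two_zpow_neg_eq]
    exact p2
end

section
/- If x and y are reordered computable real numbers, then the sum x + y is reordered computable. -/
open Filter

lemma finite_fiber {f : ℕ → ℕ} (h : Summable (fun k => (2:ℝ)^(-(f k : ℤ)))) (n : ℕ) :
    {k : ℕ | f k = n}.Finite := by
  by_contra hinf
  have hinf' : {k : ℕ | f k = n}.Infinite := hinf
  have h0 := h.tendsto_atTop_zero
  have hlt : ∀ᶠ k in atTop, (2:ℝ)^(-(f k : ℤ)) < (2:ℝ)^(-(n:ℤ)) :=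
    h0.eventually_lt_const (by positivity)
  obtain ⟨m, hm⟩ := eventually_atTop.mp hlt
  obtain ⟨k, hk, hkm⟩ := hinf'.exists_gt m
  have := hm k (le_of_lt hkm)
  rw [hk] at this
  exact lt_irrefl _ this

lemma uf_interleave (f g : ℕ → ℕ)
    (hf : ∀ n, {k : ℕ | f k = n}.Finite) (hg : ∀ n, {k : ℕ | g k = n}.Finite) (n : ℕ) :
    uf (fun k => if k % 2 = 0 then f (k/2) else g (k/2)) n = uf f n + uf g n := by
  have hset : {k : ℕ | (if k % 2 = 0 then f (k/2) else g (k/2)) = n}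
      = (fun m => 2*m) '' {k | f k = n} ∪ (fun m => 2*m+1) '' {k | g k = n} := by
    ext k
    rcases Nat.even_or_odd k with ⟨m, hm⟩ | ⟨m, hm⟩
    · subst hm
      have h1 : (m + m) % 2 = 0 := by omega
      have h2 : (m + m) / 2 = m := by omega
      simp only [Set.mem_setOf_eq, h1, if_pos rfl, h2, Set.mem_union, Set.mem_image]
      constructor
      · intro h; exact Or.inl ⟨m, h, by omega⟩
      · rintro (⟨a, ha, hae⟩ | ⟨a, ha, hae⟩)
        · have : a = m := by omega
          exact this ▸ ha
        · omega
    · subst hm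
      have h1 : ¬ (2*m+1) % 2 = 0 := by omega
      have h2 : (2*m+1) / 2 = m := by omega
      simp only [Set.mem_setOf_eq, if_neg h1, h2, Set.mem_union, Set.mem_image]
      constructor
      · intro h; exact Or.inr ⟨m, h, rfl⟩
      · rintro (⟨a, ha, hae⟩ | ⟨a, ha, hae⟩)
        · omega
        · have : a = m := by omega
          exact this ▸ ha
  have huf : ∀ (F : ℕ → ℕ) (m : ℕ), uf F m = Set.ncard {k : ℕ | F k = m} := fun _ _ => rfl
  rw [huf, huf, huf, hset]
  have hdisj : Disjoint ((fun m => 2*m) '' {k | f k = n}) ((fun m => 2*m+1) '' {k | g k = n}) := by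
    rw [Set.disjoint_left]
    rintro a ⟨b, _, hb⟩ ⟨c, _, hc⟩
    simp only at hb hc
    omega
  rw [Set.ncard_union_eq hdisj ((hf n).image _) ((hg n).image _),
    Set.ncard_image_of_injective _ (fun a b h => by omega),
    Set.ncard_image_of_injective _ (fun a b h => by omega)]

/-- reordered computable reals are closed under addition. -/
theorem stmt8 (x y : ℝ) (hx : ReorderedComputable x) (hy : ReorderedComputable y) :
    ReorderedComputable (x + y) := by
  obtain ⟨f, hfc, hfn, Lf, sf, hsfc, hsf⟩ := hx
  obtain ⟨g, hgc, hgn, Lg, sg, hsgc, hsg⟩ := hy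
  set h : ℕ → ℕ := fun k => if k % 2 = 0 then f (k/2) else g (k/2) with hh
  have hff := finite_fiber hfn.summable
  have hgf := finite_fiber hgn.summable
  have hufh : ∀ k, uf h k = uf f k + uf g k := uf_interleave f g hff hgf
  refine ⟨h, ?_, ?_, ?_⟩
  · -- computability of h
    have : h = fun k => cond (decide (k % 2 = 0)) (f (k/2)) (g (k/2)) := by
      funext k; simp [hh]
    rw [this]
    have hdiv : Computable (fun k : ℕ => k / 2) :=
      (Primrec.nat_div.comp Primrec.id (Primrec.const 2)).to_comp
    have hcond : Computable (fun k : ℕ => decide (k % 2 = 0)) := by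
      have : PrimrecPred (fun k : ℕ => k % 2 = 0) :=
        Primrec.eq.comp (Primrec.nat_mod.comp Primrec.id (Primrec.const 2))
          (Primrec.const 0)
      exact this.decide.to_comp
    exact Computable.cond hcond (hfc.comp hdiv) (hgc.comp hdiv)
  · -- IsName
    have hev : (fun k => (2:ℝ)^(-(h (2*k) : ℤ))) = fun k => (2:ℝ)^(-(f k : ℤ)) := by
      funext k
      have h1 : (2*k) % 2 = 0 := by omega
      have h2 : (2*k) / 2 = k := by omega
      simp [hh, h1, h2]
    have hod : (fun k => (2:ℝ)^(-(h (2*k+1) : ℤ))) = fun k => (2:ℝ)^(-(g k : ℤ)) := by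
      funext k
      have h1 : ¬ (2*k+1) % 2 = 0 := by omega
      have h2 : (2*k+1) / 2 = k := by omega
      simp [hh, h1, h2]
    exact HasSum.even_add_odd (hev ▸ hfn) (hod ▸ hgn)
  · -- ConvergesComputably
    refine ⟨Lf + Lg, fun n => sf (n+1) + sg (n+1), ?_, ?_⟩
    · exact Primrec.nat_add.to_comp.comp
        (hsfc.comp (Primrec.succ.to_comp)) (hsgc.comp (Primrec.succ.to_comp))
    · intro n m hm
      have hmf : m ≥ sf (n+1) := le_trans (Nat.le_add_right _ _) hm
      have hmg : m ≥ sg (n+1) := le_trans (Nat.le_add_left _ _) hm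
      have h1 := hsf (n+1) m hmf
      have h2 := hsg (n+1) m hmg
      have hsum : ∑ k ∈ Finset.range m, (uf h k : ℝ) * (2:ℝ)^(-(k:ℤ))
          = ∑ k ∈ Finset.range m, (uf f k : ℝ) * (2:ℝ)^(-(k:ℤ))
          + ∑ k ∈ Finset.range m, (uf g k : ℝ) * (2:ℝ)^(-(k:ℤ)) := by
        rw [← Finset.sum_add_distrib]
        refine Finset.sum_congr rfl fun k _ => ?_
        rw [hufh k]; push_cast; ring
      rw [hsum]
      have habs : |Lf + Lg - (∑ k ∈ Finset.range m, (uf f k : ℝ) * (2:ℝ)^(-(k:ℤ))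
          + ∑ k ∈ Finset.range m, (uf g k : ℝ) * (2:ℝ)^(-(k:ℤ)))|
          ≤ |Lf - ∑ k ∈ Finset.range m, (uf f k : ℝ) * (2:ℝ)^(-(k:ℤ))|
          + |Lg - ∑ k ∈ Finset.range m, (uf g k : ℝ) * (2:ℝ)^(-(k:ℤ))| := by
        have := abs_add_le (Lf - ∑ k ∈ Finset.range m, (uf f k : ℝ) * (2:ℝ)^(-(k:ℤ)))
          (Lg - ∑ k ∈ Finset.range m, (uf g k : ℝ) * (2:ℝ)^(-(k:ℤ)))
        calc _ = |(Lf - ∑ k ∈ Finset.range m, (uf f k : ℝ) * (2:ℝ)^(-(k:ℤ)))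
              + (Lg - ∑ k ∈ Finset.range m, (uf g k : ℝ) * (2:ℝ)^(-(k:ℤ)))| := by ring_nf
          _ ≤ _ := this
      have hpow : (2:ℝ)^(-((n+1:ℕ):ℤ)) + (2:ℝ)^(-((n+1:ℕ):ℤ)) = (2:ℝ)^(-(n:ℤ)) := by
        push_cast
        rw [← two_mul]
        rw [show -((n:ℤ)+1) = -(n:ℤ) - 1 by ring, zpow_sub₀ (by norm_num)]
        ring
      calc _ ≤ _ := habs
        _ ≤ (2:ℝ)^(-((n+1:ℕ):ℤ)) + (2:ℝ)^(-((n+1:ℕ):ℤ)) := add_le_add h1 h2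
        _ = (2:ℝ)^(-(n:ℤ)) := hpow
end

section
/- Let f : ℕ → ℕ be a function such that the series ∑_{k=0}^∞ 2^{−f(k)} converges. Then limsup_{n→∞} (u_f(n))^{1/n} lies in the interval [1, 2]. -/
open Filter

/-- if `∑ 2^{-f(k)}` converges, then `limsup (uf f n)^{1/n} ∈ [1,2]`. -/
theorem stmt14 (f : ℕ → ℕ) (hf : Summable (fun k => (2:ℝ)^(-(f k : ℤ)))) :
    1 ≤ rootLimsup (uf f) ∧ rootLimsup (uf f) ≤ 2 := by
  -- finiteness of preimages
  have hfin : ∀ n, {k : ℕ | f k = n}.Finite := by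
    intro n
    have h2 : ∀ᶠ k in Filter.cofinite, (2:ℝ)^(-(f k : ℤ)) < (2:ℝ)^(-(n:ℤ)) :=
      hf.tendsto_cofinite_zero.eventually (gt_mem_nhds (by positivity))
    refine ((Filter.eventually_cofinite.mp h2).subset ?_)
    intro k hk
    simp only [Set.mem_setOf_eq] at hk ⊢
    rw [hk]; exact lt_irrefl _
  set S := ∑' k, (2:ℝ)^(-(f k : ℤ)) with hS
  set M : ℕ := max 1 ⌈S⌉₊ with hM
  have hM1 : 1 ≤ M := le_max_left _ _
  have hSM : S ≤ (M : ℝ) := le_trans (Nat.le_ceil S) (by exact_mod_cast le_max_right _ _)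
  -- the key counting bound
  have hbound : ∀ n, uf f n ≤ M * 2 ^ n := by
    intro n
    have hcard : uf f n = (hfin n).toFinset.card := by
      rw [uf, Nat.card_coe_set_eq, Set.ncard_eq_toFinset_card _ (hfin n)]
    have hsum : ∑ k ∈ (hfin n).toFinset, (2:ℝ)^(-(f k : ℤ)) =
        (uf f n : ℝ) * (2:ℝ)^(-(n:ℤ)) := by
      have : ∀ k ∈ (hfin n).toFinset, (2:ℝ)^(-(f k : ℤ)) = (2:ℝ)^(-(n:ℤ)) := by
        intro k hk
        have hkn : f k = n := (hfin n).mem_toFinset.mp hk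
        rw [hkn]
      rw [Finset.sum_congr rfl this, Finset.sum_const, hcard]
      simp [nsmul_eq_mul]
    have hle : (uf f n : ℝ) * (2:ℝ)^(-(n:ℤ)) ≤ S := by
      rw [← hsum]
      exact Summable.sum_le_tsum _ (fun k _ => by positivity) hf
    have : (uf f n : ℝ) ≤ (M : ℝ) * 2 ^ n := by
      have h2 : (0:ℝ) < (2:ℝ)^(-(n:ℤ)) := by positivity
      rw [← le_div_iff₀ h2] at hle
      calc (uf f n : ℝ) ≤ S / (2:ℝ)^(-(n:ℤ)) := hle
        _ = S * 2 ^ n := by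
            rw [div_eq_mul_inv, ← zpow_neg, neg_neg, zpow_natCast]
        _ ≤ (M:ℝ) * 2 ^ n := by
            apply mul_le_mul_of_nonneg_right hSM (by positivity)
    exact_mod_cast this
  constructor
  · -- lower bound
    have hinf : {n | 1 ≤ uf f n}.Infinite := by
      intro hfin2
      have hr : (Set.range f).Finite := by
        apply hfin2.subset
        rintro _ ⟨k, rfl⟩
        have : Nonempty {j : ℕ | f j = f k} := ⟨⟨k, rfl⟩⟩
        have := (hfin (f k)).to_subtype
        exact Nat.card_pos
      have : (Set.univ : Set ℕ).Finite := by
        have : (⋃ n ∈ Set.range f, {k : ℕ | f k = n}).Finite :=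
          hr.biUnion (fun n _ => hfin n)
        apply this.subset
        intro k _
        exact Set.mem_biUnion ⟨k, rfl⟩ rfl
      exact Set.infinite_univ this
    have hfreq : ∃ᶠ n in atTop, (1:ENNReal) ≤ (uf f n : ENNReal) ^ (1/(n:ℝ)) := by
      rw [← Nat.cofinite_eq_atTop]
      apply hinf.frequently_cofinite.mono
      intro n hn
      calc (1:ENNReal) = 1 ^ (1/(n:ℝ)) := (ENNReal.one_rpow _).symm
        _ ≤ (uf f n : ENNReal) ^ (1/(n:ℝ)) := by
            apply ENNReal.rpow_le_rpow _ (by positivity)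
            exact_mod_cast hn
    exact le_limsup_of_frequently_le' hfreq
  · -- upper bound
    have hMne : (M:NNReal) ≠ 0 := Nat.cast_ne_zero.mpr (by omega)
    have hMtends : Tendsto (fun n : ℕ => (M : ENNReal) ^ (1/(n:ℝ))) atTop (nhds 1) := by
      have hM0 : (M:ℝ) ≠ 0 := by positivity
      have hreal : Tendsto (fun n : ℕ => (M:ℝ) ^ (1/(n:ℝ))) atTop (nhds 1) := by
        have := (Real.continuousAt_const_rpow (b := 0) hM0).tendsto.comp
          tendsto_one_div_atTop_nhds_zero_nat
        simpa [Function.comp_def, Real.rpow_zero] using this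
      have hnn : Tendsto (fun n : ℕ => ((M:NNReal) ^ (1/(n:ℝ)) : NNReal)) atTop (nhds 1) := by
        rw [← NNReal.tendsto_coe]
        simpa only [NNReal.coe_rpow, NNReal.coe_natCast, NNReal.coe_one] using hreal
      have h := (ENNReal.tendsto_coe).mpr hnn
      rw [ENNReal.coe_one] at h
      have hMM : ((M:NNReal):ENNReal) = (M:ENNReal) := by norm_cast
      exact h.congr (fun n => by rw [ENNReal.coe_rpow_of_ne_zero hMne, hMM])
    have htends : Tendsto (fun n : ℕ => (M : ENNReal) ^ (1/(n:ℝ)) * 2) atTop (nhds 2) := by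
      have := ENNReal.Tendsto.mul_const (b := 2) hMtends (Or.inl one_ne_zero)
      simpa using this
    have hev : ∀ᶠ n in atTop, (uf f n : ENNReal) ^ (1/(n:ℝ)) ≤ (M : ENNReal) ^ (1/(n:ℝ)) * 2 := by
      filter_upwards [eventually_ge_atTop 1] with n hn
      have h1 : (uf f n : ENNReal) ≤ (M : ENNReal) * 2 ^ n := by
        calc (uf f n : ENNReal) ≤ ((M * 2^n : ℕ) : ENNReal) := by exact_mod_cast hbound n
          _ = (M : ENNReal) * 2 ^ n := by push_cast; ring
      calc (uf f n : ENNReal) ^ (1/(n:ℝ)) ≤ ((M : ENNReal) * 2 ^ n) ^ (1/(n:ℝ)) :=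
            ENNReal.rpow_le_rpow h1 (by positivity)
        _ = (M : ENNReal) ^ (1/(n:ℝ)) * ((2:ENNReal) ^ n) ^ (1/(n:ℝ)) :=
            ENNReal.mul_rpow_of_nonneg _ _ (by positivity)
        _ = (M : ENNReal) ^ (1/(n:ℝ)) * 2 := by
            congr 1
            rw [← ENNReal.rpow_natCast 2 n, ← ENNReal.rpow_mul]
            rw [mul_one_div, div_self (Nat.cast_ne_zero.mpr (by omega) : (n:ℝ) ≠ 0),
              ENNReal.rpow_one]
    calc rootLimsup (uf f) ≤ Filter.limsup (fun n : ℕ => (M : ENNReal) ^ (1/(n:ℝ)) * 2) atTop :=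
          Filter.limsup_le_limsup hev
      _ = 2 := htends.limsup_eq
end

section
/- Let f : ℕ → ℕ be a computable function which tends to infinity and satisfies limsup_{n→∞} (u_f(n))^{1/n} < 2. Then the series ∑_{k=0}^∞ 2^{−f(k)} converges and its limit is a reordered computable real number. -/
open Filter

/-- From `rootLimsup a < 2`, extract a geometric bound `a n ≤ ρ^n` eventually, `1 ≤ ρ < 2`. -/
lemma aux_geom_bound (a : ℕ → ℕ) (h : rootLimsup a < 2) :
    ∃ (ρ : ℝ) (N : ℕ), 1 ≤ ρ ∧ ρ < 2 ∧ ∀ n ≥ N, (a n : ℝ) ≤ ρ ^ n := by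
  obtain ⟨c, hc1, hc2⟩ := exists_between h
  have hcne : c ≠ ⊤ := (hc2.trans_le le_top).ne
  obtain ⟨N, hN⟩ := Filter.eventually_atTop.mp (Filter.eventually_lt_of_limsup_lt hc1)
  refine ⟨max c.toReal 1, max N 1, le_max_right _ _, ?_, ?_⟩
  · apply max_lt _ one_lt_two
    have := ENNReal.toReal_strict_mono (by norm_num) hc2
    simpa using this
  · intro n hn
    have hn1 : 1 ≤ n := le_trans (le_max_right _ _) hn
    have hn0 : (n : ℝ) ≠ 0 := Nat.cast_ne_zero.mpr (by omega)
    have h1 : ((a n : ENNReal) ^ (1 / (n:ℝ))) ^ n ≤ c ^ n :=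
      pow_le_pow_left₀ (zero_le) (hN n (le_trans (le_max_left _ _) hn)).le n
    have h2 : ((a n : ENNReal) ^ (1 / (n:ℝ))) ^ n = (a n : ENNReal) := by
      rw [← ENNReal.rpow_natCast ((a n : ENNReal) ^ (1 / (n:ℝ))) n, ← ENNReal.rpow_mul,
        one_div, inv_mul_cancel₀ hn0, ENNReal.rpow_one]
    rw [h2] at h1
    have h3 : (a n : ℝ) ≤ c.toReal ^ n := by
      have := ENNReal.toReal_mono (by simp [hcne, ENNReal.pow_ne_top]) h1
      simpa [ENNReal.toReal_pow] using this
    exact h3.trans (pow_le_pow_left₀ ENNReal.toReal_nonneg (le_max_left _ _) n)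

lemma two_zpow_neg (k : ℕ) : (2:ℝ) ^ (-(k:ℤ)) = ((2:ℝ) ^ k)⁻¹ := by
  rw [zpow_neg, zpow_natCast]

/-- if `f` is computable, tends to infinity and
`limsup (uf f n)^{1/n} < 2`, then `∑ 2^{-f(k)}` converges and its limit is reordered
computable. -/
theorem stmt15 (f : ℕ → ℕ) (hc : Computable f) (hf : TendsToInfinity f)
    (h : rootLimsup (uf f) < 2) :
    ∃ x : ℝ, HasSum (fun k => (2:ℝ)^(-(f k : ℤ))) x ∧ ReorderedComputable x :=  by
  classical
  -- fibers of `f` are finite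
  have hfib : ∀ n : ℕ, (f ⁻¹' {n}).Finite := by
    intro n
    obtain ⟨m, hm⟩ := hf n
    apply (Set.finite_Iio m).subset
    intro k hk
    simp only [Set.mem_preimage, Set.mem_singleton_iff] at hk
    by_contra hk'
    simp only [Set.mem_Iio, not_lt] at hk'
    exact absurd hk (by have := hm k hk'; omega)
  -- geometric bound on uf
  obtain ⟨ρ, N, hρ1, hρ2, hbd⟩ := aux_geom_bound (uf f) h
  set q : ℝ := ρ / 2 with hqdef
  have hq0 : 0 ≤ q := by positivity
  have hq1 : q < 1 := by rw [hqdef]; linarith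
  have h1q : 0 < 1 - q := by linarith
  -- the reordered series
  set g : ℕ → ℝ := fun n => (uf f n : ℝ) * (2:ℝ) ^ (-(n:ℤ)) with hgdef
  have hgnonneg : ∀ n, 0 ≤ g n := fun n => by
    apply mul_nonneg (Nat.cast_nonneg _) (by positivity)
  have hgle : ∀ n, N ≤ n → g n ≤ q ^ n := by
    intro n hn
    have : g n ≤ ρ ^ n * (2:ℝ) ^ (-(n:ℤ)) :=
      mul_le_mul_of_nonneg_right (hbd n hn) (by positivity)
    refine this.trans (le_of_eq ?_)
    rw [two_zpow_neg, hqdef, div_pow, div_eq_mul_inv]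
  have hgsummable : Summable g := by
    rw [← summable_nat_add_iff N]
    apply Summable.of_nonneg_of_le (fun i => hgnonneg _)
      (fun i => (hgle (i + N) (by omega)).trans (le_of_eq (pow_add q i N)))
    exact (summable_geometric_of_lt_one hq0 hq1).mul_right _
  set x : ℝ := ∑' n, g n with hxdef
  have hxnonneg : 0 ≤ x := tsum_nonneg hgnonneg
  -- ENNReal bookkeeping
  set w : ℕ → ENNReal := fun n => ((2:ENNReal) ^ n)⁻¹ with hwdef
  have hwne : ∀ n, w n ≠ ⊤ := fun n =>
    ENNReal.inv_ne_top.mpr (pow_ne_zero n (by norm_num))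
  have hof : ∀ n, ENNReal.ofReal (g n) = (uf f n : ENNReal) * w n := by
    intro n
    rw [hgdef]
    rw [ENNReal.ofReal_mul (Nat.cast_nonneg _), ENNReal.ofReal_natCast, two_zpow_neg,
      ENNReal.ofReal_inv_of_pos (by positivity), ENNReal.ofReal_pow (by norm_num),
      ENNReal.ofReal_ofNat]
  have hinner : ∀ n : ℕ, ∑' k : ↥(f ⁻¹' {n}), w (f k) = (uf f n : ENNReal) * w n := by
    intro n
    haveI : Fintype ↥(f ⁻¹' {n}) := (hfib n).fintype
    rw [tsum_fintype]
    rw [Finset.sum_congr rfl (fun k _ => by rw [show f k.1 = n from k.2]),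
      Finset.sum_const, nsmul_eq_mul]
    have hcard : (Finset.univ (α := ↥(f ⁻¹' {n}))).card = uf f n := by
      rw [Finset.card_univ]
      unfold uf
      exact (Nat.card_eq_fintype_card (α := ↥(f ⁻¹' {n}))).symm
    rw [hcard]
  have hE : ∑' k, w (f k) = ENNReal.ofReal x := by
    rw [← ENNReal.tsum_fiberwise (fun k => w (f k)) f, hxdef,
      ENNReal.ofReal_tsum_of_nonneg hgnonneg hgsummable]
    exact tsum_congr fun n => by rw [hinner n, hof n]
  have hEne : ∑' k, w (f k) ≠ ⊤ := by rw [hE]; exact ENNReal.ofReal_ne_top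
  -- the sum of 2^{-f k}
  have hwtr : ∀ m : ℕ, (w m).toReal = (2:ℝ) ^ (-(m:ℤ)) := by
    intro m
    rw [two_zpow_neg, hwdef]
    simp [ENNReal.toReal_inv, ENNReal.toReal_pow]
  have hHS : HasSum (fun k => (2:ℝ) ^ (-(f k : ℤ))) x := by
    have h1 := ENNReal.hasSum_toReal hEne
    have h2 : ∑' k, (w (f k)).toReal = x := by
      rw [← ENNReal.tsum_toReal_eq (fun k => hwne (f k)), hE, ENNReal.toReal_ofReal hxnonneg]
    rw [h2] at h1
    convert h1 using 2 with k
    rw [hwtr]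
  -- the computable modulus
  obtain ⟨a, ha⟩ := exists_pow_lt_of_lt_one (by norm_num : (0:ℝ) < 1/2) hq1
  obtain ⟨b₀, hb₀⟩ := exists_pow_lt_of_lt_one h1q hq1
  set b : ℕ := max b₀ N with hbdef
  refine ⟨x, hHS, f, hc, hHS, x, fun n => b + a * n, ?_, ?_⟩
  · exact (Primrec₂.comp Primrec.nat_add (Primrec.const b)
      (Primrec₂.comp Primrec.nat_mul (Primrec.const a) Primrec.id)).to_comp
  · intro n m hm
    have hm' : b + a * n ≤ m := hm
    have hbN : N ≤ b := le_max_right b₀ N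
    have hmN : N ≤ m := by omega
    have htail : x - ∑ k ∈ Finset.range m, g k = ∑' i, g (i + m) := by
      have := Summable.sum_add_tsum_nat_add m hgsummable
      rw [hxdef]; linarith
    have htail0 : 0 ≤ ∑' i, g (i + m) := tsum_nonneg fun i => hgnonneg _
    have hgeo : Summable (fun i : ℕ => q ^ (i + m)) := by
      simp_rw [pow_add]
      exact (summable_geometric_of_lt_one hq0 hq1).mul_right _
    have htle : ∑' i, g (i + m) ≤ q ^ m * (1 - q)⁻¹ := by
      calc ∑' i, g (i + m) ≤ ∑' i : ℕ, q ^ (i + m) :=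
            Summable.tsum_le_tsum (fun i => hgle (i + m) (by omega))
              ((summable_nat_add_iff m).mpr hgsummable) hgeo
        _ = q ^ m * (1 - q)⁻¹ := by
            simp_rw [pow_add]
            rw [tsum_mul_right, tsum_geometric_of_lt_one hq0 hq1, mul_comm]
    have hqb : q ^ b ≤ 1 - q :=
      le_trans (pow_le_pow_of_le_one hq0 hq1.le (le_max_left b₀ N)) hb₀.le
    have hfinal : q ^ m * (1 - q)⁻¹ ≤ (2:ℝ) ^ (-(n:ℤ)) := by
      have e1 : q ^ m ≤ q ^ (b + a * n) := pow_le_pow_of_le_one hq0 hq1.le hm'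
      have e2 : q ^ (b + a * n) = q ^ b * (q ^ a) ^ n := by rw [pow_add, pow_mul]
      have e4 : (q ^ a) ^ n ≤ (1/2 : ℝ) ^ n := pow_le_pow_left₀ (pow_nonneg hq0 a) ha.le n
      have e5 : q ^ b * (q ^ a) ^ n * (1 - q)⁻¹ ≤ (1 - q) * ((1/2) ^ n) * (1 - q)⁻¹ := by
        apply mul_le_mul_of_nonneg_right _ (inv_nonneg.mpr h1q.le)
        exact mul_le_mul hqb e4 (pow_nonneg (pow_nonneg hq0 a) n) h1q.le
      have e6 : (1 - q) * ((1/2:ℝ) ^ n) * (1 - q)⁻¹ = (1/2) ^ n := by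
        rw [mul_comm (1 - q), mul_assoc, mul_inv_cancel₀ h1q.ne', mul_one]
      have e7 : ((1:ℝ)/2) ^ n = (2:ℝ) ^ (-(n:ℤ)) := by
        rw [two_zpow_neg, one_div, inv_pow]
      calc q ^ m * (1 - q)⁻¹ ≤ q ^ (b + a * n) * (1 - q)⁻¹ :=
            mul_le_mul_of_nonneg_right e1 (inv_nonneg.mpr h1q.le)
        _ = q ^ b * (q ^ a) ^ n * (1 - q)⁻¹ := by rw [e2]
        _ ≤ (1 - q) * ((1/2) ^ n) * (1 - q)⁻¹ := e5
        _ = (1/2) ^ n := e6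
        _ = (2:ℝ) ^ (-(n:ℤ)) := e7
    rw [abs_of_nonneg (by rw [htail]; exact htail0), htail]
    exact htle.trans hfinal
end
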